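/- arXiv:0811.0189 — 5 statements merged into one kernel-verified Lean document; each statement's English description precedes it below -/
import Mathlib

section
/- Let b > 0, β ≥ 0, f₁(x) = x^β and f₂(x) = x^{α+β+1} for α ≥ 0. If u ∈ H²(b, b+1) is nonzero and satisfies ∫_b^{b+1} u(x)x^β dx = 0 and ∫_b^{b+1} (u(x)/x^β)' x^α dx = 0, then f₁, f₂, u are linearly independent in L²(b, b+1). -/
open Real MeasureTheory Set intervalIntegral

lemma rpow_integral_pos (b : ℝ) (hb : 0 < b) (p : ℝ) :
    0 < ∫ x in b..(b + 1), x ^ p := by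
  have hlt : b < b + 1 := by linarith
  have hcont : ContinuousOn (fun x : ℝ => x ^ p) (Set.Icc b (b + 1)) := by
    apply ContinuousOn.rpow_const continuousOn_id
    intro x hx
    exact Or.inl (by simp; nlinarith [hx.1])
  have hint : IntervalIntegrable (fun x : ℝ => x ^ p) volume b (b + 1) := by
    apply ContinuousOn.intervalIntegrable
    rw [Set.uIcc_of_le hlt.le]
    exact hcont
  apply intervalIntegral.intervalIntegral_pos_of_pos_on hint _ hlt
  intro x hx
  exact Real.rpow_pos_of_pos (lt_trans hb hx.1) p

/-- If a nonzero `u ∈ H²(b,b+1)` satisfies the two integral constraints, then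
`f₁(x) = x^β`, `f₂(x) = x^{α+β+1}` and `u` are linearly independent on `(b,b+1)`. -/
theorem linear_independence_of_constraints
    (α β b : ℝ) (hα : 0 ≤ α) (hβ : 0 ≤ β) (hb : 0 < b)
    (u : ℝ → ℝ) (hu : ContDiffOn ℝ 2 u (Set.Icc b (b + 1)))
    (hne : ¬ ∀ x ∈ Set.Icc b (b + 1), u x = 0)
    (hcond1 : ∫ x in b..(b + 1), u x * x ^ β = 0)
    (hcond2 : ∫ x in b..(b + 1), deriv (fun t : ℝ => u t / t ^ β) x * x ^ α = 0) :
    ∀ c₁ c₂ c₃ : ℝ,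
      (∀ x ∈ Set.Icc b (b + 1),
        c₁ * x ^ β + c₂ * x ^ (α + β + 1) + c₃ * u x = 0) →
      c₁ = 0 ∧ c₂ = 0 ∧ c₃ = 0 := by
  intro c₁ c₂ c₃ h
  have hlt : b < b + 1 := by linarith
  have hsplit : ∀ x : ℝ, 0 < x → x ^ (α + β + 1) = x ^ (α + 1) * x ^ β := by
    intro x hx
    rw [show α + β + 1 = (α + 1) + β by ring, Real.rpow_add hx]
  by_cases hc₃ : c₃ = 0
  · -- endpoint evaluation
    have h1 := h b ⟨le_refl _, hlt.le⟩
    have h2 := h (b + 1) ⟨hlt.le, le_refl _⟩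
    rw [hc₃, zero_mul, add_zero, hsplit b hb] at h1
    rw [hc₃, zero_mul, add_zero, hsplit (b + 1) (by linarith)] at h2
    have hbβ : (0:ℝ) < b ^ β := Real.rpow_pos_of_pos hb β
    have hb1β : (0:ℝ) < (b + 1) ^ β := Real.rpow_pos_of_pos (by linarith) β
    have e1 : c₁ + c₂ * b ^ (α + 1) = 0 := by
      have : (c₁ + c₂ * b ^ (α + 1)) * b ^ β = 0 := by linarith [h1]; 
      exact (mul_eq_zero.mp this).resolve_right hbβ.ne'
    have e2 : c₁ + c₂ * (b + 1) ^ (α + 1) = 0 := by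
      have : (c₁ + c₂ * (b + 1) ^ (α + 1)) * (b + 1) ^ β = 0 := by linarith [h2]
      exact (mul_eq_zero.mp this).resolve_right hb1β.ne'
    have hmono : b ^ (α + 1) < (b + 1) ^ (α + 1) :=
      Real.rpow_lt_rpow hb.le (by linarith) (by linarith)
    have hc₂ : c₂ = 0 := by
      have hz : c₂ * ((b + 1) ^ (α + 1) - b ^ (α + 1)) = 0 := by nlinarith [e1, e2]
      rcases mul_eq_zero.mp hz with h' | h'
      · exact h'
      · exfalso; nlinarith
    refine ⟨?_, hc₂, hc₃⟩
    rw [hc₂, zero_mul, add_zero] at e1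
    linarith
  · -- c₃ ≠ 0 : solve for u
    have key : ∀ x ∈ Set.Icc b (b + 1),
        u x = -(c₁ * x ^ β + c₂ * x ^ (α + β + 1)) / c₃ := by
      intro x hx
      have := h x hx
      field_simp
      linarith
    -- Step 1: c₂ = 0 via hcond2
    have hderiv : ∀ x ∈ Set.Ioo b (b + 1),
        deriv (fun t : ℝ => u t / t ^ β) x = -(c₂ * ((α + 1) * x ^ α)) / c₃ := by
      intro x hx
      have hx0 : 0 < x := lt_trans hb hx.1
      have heq : (fun t : ℝ => u t / t ^ β)
          =ᶠ[nhds x] fun t : ℝ => -(c₁ + c₂ * t ^ (α + 1)) / c₃ := by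
        filter_upwards [isOpen_Ioo.mem_nhds hx] with t ht
        have ht0 : 0 < t := lt_trans hb ht.1
        have htβ : (t:ℝ) ^ β ≠ 0 := (Real.rpow_pos_of_pos ht0 β).ne'
        rw [key t (Set.Ioo_subset_Icc_self ht), hsplit t ht0]
        field_simp
      rw [heq.deriv_eq]
      have h1 : HasDerivAt (fun t : ℝ => t ^ (α + 1)) ((α + 1) * x ^ α) x := by
        have := Real.hasDerivAt_rpow_const (x := x) (p := α + 1) (Or.inl hx0.ne')
        simpa using this
      exact ((((h1.const_mul c₂).const_add c₁).neg).div_const c₃).deriv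
    have hint2 : (∫ x in b..(b + 1), deriv (fun t : ℝ => u t / t ^ β) x * x ^ α)
        = ∫ x in b..(b + 1), (-(c₂ * (α + 1)) / c₃) * x ^ (α + α) := by
      apply intervalIntegral.integral_congr_ae
      have hae : ∀ᵐ x : ℝ, x ≠ b + 1 := by
        rw [MeasureTheory.ae_iff]
        simpa using Real.volume_singleton
      filter_upwards [hae] with x hxne hx
      rw [Set.uIoc_of_le hlt.le] at hx
      have hxIoo : x ∈ Set.Ioo b (b + 1) := ⟨hx.1, lt_of_le_of_ne hx.2 hxne⟩
      have hx0 : 0 < x := lt_trans hb hxIoo.1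
      rw [hderiv x hxIoo, Real.rpow_add hx0]
      ring
    rw [hint2, intervalIntegral.integral_const_mul] at hcond2
    have hposα : 0 < ∫ x in b..(b + 1), x ^ (α + α) := rpow_integral_pos b hb _
    have hc₂ : c₂ = 0 := by
      rcases mul_eq_zero.mp hcond2 with h' | h'
      · have : c₂ * (α + 1) = 0 := by
          field_simp at h'
          linear_combination -h'
        rcases mul_eq_zero.mp this with h'' | h''
        · exact h''
        · linarith
      · exact absurd h' hposα.ne'
    -- Step 2: c₁ = 0 via hcond1
    have hint1 : (∫ x in b..(b + 1), u x * x ^ β)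
        = ∫ x in b..(b + 1), (-c₁ / c₃) * x ^ (β + β) := by
      apply intervalIntegral.integral_congr
      intro x hx
      rw [Set.uIcc_of_le hlt.le] at hx
      have hx0 : 0 < x := lt_of_lt_of_le hb hx.1
      show u x * x ^ β = -c₁ / c₃ * x ^ (β + β)
      rw [key x hx, hc₂, zero_mul, add_zero, Real.rpow_add hx0]
      ring
    rw [hint1, intervalIntegral.integral_const_mul] at hcond1
    have hposβ : 0 < ∫ x in b..(b + 1), x ^ (β + β) := rpow_integral_pos b hb _
    have hc₁ : c₁ = 0 := by
      rcases mul_eq_zero.mp hcond1 with h' | h'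
      · field_simp at h'
        linear_combination -h'
      · exact absurd h' hposβ.ne'
    refine ⟨hc₁, hc₂, ?_⟩
    exfalso
    apply hne
    intro x hx
    have := h x hx
    rw [hc₁, hc₂, zero_mul, zero_mul, zero_add, zero_add] at this
    exact (mul_eq_zero.mp this).resolve_left hc₃
end

section
/- Let α ≥ 0, 0 ≤ β < 3/2 + α, and 0 ≤ ν < 3 with ν ≤ 2β. There exists a constant C > 0 such that for every b > 0 and every u ∈ H²(b, b+1) satisfying ∫_b^{b+1} u(x)x^β dx = 0 and ∫_b^{b+1}(u(x)/x^β)' x^α dx = 0, one has sup_{b ≤ y ≤ b+1} |u(y)|²/y^ν ≤ C · ∫_b^{b+1} |(x^{−α}(u(x)/x^β)')'|² x^{2(α+β)} dx. -/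
open Real MeasureTheory Set intervalIntegral
open Filter Topology

lemma pow_int_bound (r E : ℝ) (hE0 : 0 ≤ E) (hrE : 0 ≤ r + 1 + E)
    (hr1 : r = -1 → 0 < E) :
    ∃ c > (0:ℝ), ∀ z x : ℝ, 0 < z → z ≤ x → x ≤ 2 →
      (∫ σ in z..x, σ ^ r) ≤ c * z ^ (-E) := by
  have h2 : (0:ℝ) < 2 := by norm_num
  rcases lt_trichotomy (r + 1) 0 with hc | hc | hc
  · -- r + 1 < 0
    have hden : (0:ℝ) < -(r + 1) := by linarith
    refine ⟨2 ^ (r + 1 + E) * (-(r + 1))⁻¹,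
      mul_pos (rpow_pos_of_pos h2 _) (inv_pos.mpr hden), fun z x hz hzx hx2 => ?_⟩
    have h0 : (0:ℝ) ∉ Set.uIcc z x := by
      rw [Set.mem_uIcc]; push_neg
      constructor <;> intro h <;> nlinarith
    rw [integral_rpow (Or.inr ⟨by intro h; rw [h] at hc; norm_num at hc, h0⟩)]
    have hx1 : (0:ℝ) ≤ x ^ (r + 1) := rpow_nonneg (by linarith) _
    have hz1 : z ^ (r + 1) ≤ 2 ^ (r + 1 + E) * z ^ (-E) := by
      have e : z ^ (r + 1) = z ^ (r + 1 + E) * z ^ (-E) := by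
        rw [← rpow_add hz]; ring_nf
      rw [e]
      have h1 : z ^ (r + 1 + E) ≤ 2 ^ (r + 1 + E) :=
        rpow_le_rpow hz.le (by linarith) hrE
      have hzE : (0:ℝ) ≤ z ^ (-E) := rpow_nonneg hz.le _
      nlinarith
    have e1 : (x ^ (r+1) - z ^ (r+1))/(r+1) = (z ^ (r+1) - x ^ (r+1)) * (-(r+1))⁻¹ := by
      rw [inv_neg, div_eq_mul_inv]; ring
    rw [e1, mul_comm (2 ^ (r + 1 + E)) (-(r+1))⁻¹, mul_assoc]
    have hinv : (0:ℝ) ≤ (-(r+1))⁻¹ := (inv_pos.mpr hden).le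
    have : z ^ (r+1) - x ^ (r+1) ≤ 2 ^ (r + 1 + E) * z ^ (-E) := by linarith
    exact mul_le_mul_of_nonneg_left this hinv |>.trans_eq' (by ring)
  · -- r = -1
    have hr : r = -1 := by linarith
    have hE : 0 < E := hr1 hr
    refine ⟨2 ^ E / E, by positivity, fun z x hz hzx hx2 => ?_⟩
    have h0 : (0:ℝ) ∉ Set.uIcc z x := by
      rw [Set.mem_uIcc]; push_neg
      constructor <;> intro h <;> nlinarith
    have e : (∫ σ in z..x, σ ^ r) = ∫ σ in z..x, σ⁻¹ := by
      subst hr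
      refine intervalIntegral.integral_congr (fun σ hσ => ?_)
      have hσ0 : 0 < σ := lt_of_lt_of_le hz (by
        rcases Set.mem_uIcc.mp hσ with h | h
        · exact h.1
        · linarith [h.1])
      rw [rpow_neg_one]
    rw [e, integral_inv h0]
    -- log (x/z) ≤ log (2/z) ≤ (2/z)^E / E = 2^E/E * z^(-E)
    have hxz : 0 < x / z := div_pos (lt_of_lt_of_le hz hzx) hz
    have h1 : Real.log (x / z) ≤ Real.log (2 / z) :=
      Real.log_le_log hxz (div_le_div_of_nonneg_right hx2 hz.le |>.trans_eq rfl)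
    have h2z : (0:ℝ) < 2 / z := by positivity
    have h3 : Real.log (2 / z) ≤ (2 / z) ^ E / E := by
      have := Real.log_le_sub_one_of_pos (Real.rpow_pos_of_pos h2z E)
      rw [Real.log_rpow h2z] at this
      have : E * Real.log (2/z) ≤ (2/z) ^ E - 1 := this
      have hp : (0:ℝ) < (2/z) ^ E := Real.rpow_pos_of_pos h2z E
      rw [le_div_iff₀ hE]
      nlinarith
    have h4 : (2 / z) ^ E = 2 ^ E * z ^ (-E) := by
      rw [Real.div_rpow (by norm_num) hz.le, Real.rpow_neg hz.le, div_eq_mul_inv]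
    calc Real.log (x / z) ≤ (2/z) ^ E / E := h1.trans h3
      _ = 2 ^ E / E * z ^ (-E) := by rw [h4]; ring
  · -- r + 1 > 0
    refine ⟨2 ^ (r + 1 + E) / (r + 1), by positivity, fun z x hz hzx hx2 => ?_⟩
    rw [integral_rpow (Or.inl (by linarith))]
    have hz1 : (0:ℝ) ≤ z ^ (r + 1) := rpow_nonneg hz.le _
    have hx1 : x ^ (r + 1) ≤ 2 ^ (r + 1) := rpow_le_rpow (by linarith) hx2 hc.le
    have hzE : (2:ℝ) ^ (-E) ≤ z ^ (-E) :=
      rpow_le_rpow_of_nonpos hz (hzx.trans hx2) (by linarith)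
    have h2E : (0:ℝ) < 2 ^ (-E) := rpow_pos_of_pos h2 _
    have key : (2:ℝ) ^ (r+1) = (2:ℝ) ^ (r+1+E) * (2:ℝ) ^ (-E) := by rw [← rpow_add h2]; ring_nf
    have h2p : (0:ℝ) < 2 ^ (r+1+E) := rpow_pos_of_pos h2 _
    have hnum : x ^ (r+1) - z ^ (r+1) ≤ 2 ^ (r+1+E) * z ^ (-E) := by nlinarith
    calc (x ^ (r+1) - z ^ (r+1)) / (r+1) ≤ (2 ^ (r+1+E) * z ^ (-E)) / (r+1) :=
          div_le_div_of_nonneg_right hnum hc.le |>.trans_eq rfl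
      _ = 2 ^ (r+1+E) / (r+1) * z ^ (-E) := by ring

lemma interval_CS (z x : ℝ) (hzx : z ≤ x) (f h : ℝ → ℝ)
    (hf : ContinuousOn f (Set.Icc z x)) (hh : ContinuousOn h (Set.Icc z x)) :
    (∫ σ in z..x, f σ * h σ) ≤
      Real.sqrt (∫ σ in z..x, (f σ)^2) * Real.sqrt (∫ σ in z..x, (h σ)^2) := by
  have huI : Set.uIcc z x = Set.Icc z x := Set.uIcc_of_le hzx
  have hf' : ContinuousOn f (Set.uIcc z x) := huI ▸ hf
  have hh' : ContinuousOn h (Set.uIcc z x) := huI ▸ hh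
  have hif2 : IntervalIntegrable (fun σ => (f σ)^2) volume z x :=
    ((hf'.pow 2)).intervalIntegrable
  have hih2 : IntervalIntegrable (fun σ => (h σ)^2) volume z x :=
    ((hh'.pow 2)).intervalIntegrable
  have hifh : IntervalIntegrable (fun σ => f σ * h σ) volume z x :=
    (hf'.mul hh').intervalIntegrable
  set A := ∫ σ in z..x, (f σ)^2 with hA
  set B := ∫ σ in z..x, (h σ)^2 with hB
  set P := ∫ σ in z..x, f σ * h σ with hP
  have hA0 : 0 ≤ A := intervalIntegral.integral_nonneg hzx (fun σ _ => sq_nonneg _)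
  have hB0 : 0 ≤ B := intervalIntegral.integral_nonneg hzx (fun σ _ => sq_nonneg _)
  have expand : ∀ L : ℝ, 0 ≤ A - 2*L*P + L^2*B := by
    intro L
    have key : (∫ σ in z..x, (f σ - L * h σ)^2) = A - 2*L*P + L^2*B := by
      have h1 : ∀ σ : ℝ, (f σ - L*h σ)^2
          = ((f σ)^2 - (2*L)*(f σ*h σ)) + L^2*(h σ)^2 := fun σ => by ring
      simp_rw [h1]
      rw [intervalIntegral.integral_add (hif2.sub (hifh.const_mul _)) (hih2.const_mul _),
        intervalIntegral.integral_sub hif2 (hifh.const_mul _),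
        intervalIntegral.integral_const_mul, intervalIntegral.integral_const_mul]
    rw [← key]
    exact intervalIntegral.integral_nonneg hzx (fun σ _ => sq_nonneg _)
  have hPAB : P^2 ≤ A*B := by
    rcases eq_or_lt_of_le hB0 with hBz | hBp
    · have hPz : P = 0 := by
        by_contra hPne
        have h1 := expand ((A+1)/(2*P))
        rw [← hBz] at h1
        have : 2 * ((A+1)/(2*P)) * P = A + 1 := by field_simp
        rw [this] at h1
        simp at h1
        linarith
      rw [hPz, ← hBz]; simp
    · have h1 := expand (P/B)
      have h2 : A - 2*(P/B)*P + (P/B)^2*B = A - P^2/B := by field_simp; ring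
      rw [h2] at h1
      rw [← sub_nonneg]
      have : A*B - P^2 = (A - P^2/B)*B := by field_simp
      rw [this]
      positivity
  calc P ≤ |P| := le_abs_self P
    _ = Real.sqrt (P^2) := (Real.sqrt_sq_eq_abs P).symm
    _ ≤ Real.sqrt (A*B) := Real.sqrt_le_sqrt hPAB
    _ = Real.sqrt A * Real.sqrt B := Real.sqrt_mul hA0 B

set_option maxHeartbeats 2000000 in
/-- Sobolev-type lemma: there is `C > 0`, uniform in `b > 0`, such that for every
`u ∈ H²(b,b+1)` satisfying the two integral constraints,
`sup_{b ≤ y ≤ b+1} |u(y)|²/y^ν ≤ C · h_b[u]`. -/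
theorem sobolev_type_lemma
    (α β ν : ℝ) (hα : 0 ≤ α) (hβ0 : 0 ≤ β) (hβ : β < 3 / 2 + α)
    (hν0 : 0 ≤ ν) (hν3 : ν < 3) (hνβ : ν ≤ 2 * β) :
    ∃ C > (0 : ℝ), ∀ b > (0 : ℝ), ∀ u : ℝ → ℝ,
      ContDiffOn ℝ 2 u (Set.Icc b (b + 1)) →
      (∫ x in b..(b + 1), u x * x ^ β) = 0 →
      (∫ x in b..(b + 1), deriv (fun t : ℝ => u t / t ^ β) x * x ^ α) = 0 →
      ∀ y ∈ Set.Icc b (b + 1),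
        (u y) ^ 2 / y ^ ν
          ≤ C * ∫ x in b..(b + 1),
              (deriv (fun s : ℝ =>
                deriv (fun r : ℝ => u r / r ^ β) s / s ^ α) x) ^ 2
                * x ^ (2 * (α + β)) := by
  set γ := α + β with hγdef
  have hγ0 : 0 ≤ γ := by positivity
  set ε : ℝ := min ((3 - ν)/2) (1/2) with hεdef
  have hε : 0 < ε := lt_min (by linarith) (by norm_num)
  have hε2 : ε ≤ 1/2 := min_le_right _ _
  have hε3 : 2*ε ≤ 3 - ν := by
    have := min_le_left ((3 - ν)/2) (1/2); linarith
  set e₁ : ℝ := if 2*γ < 1 then 0 else if 2*γ = 1 then ε else γ - 1/2 with he₁def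
  have he₁0 : 0 ≤ e₁ := by
    rw [he₁def]; split_ifs with h1 h2
    · exact le_refl 0
    · exact hε.le
    · push_neg at h1
      have : 1 < 2*γ := lt_of_le_of_ne h1 (Ne.symm h2)
      linarith
  have he₁strict : -1 < 2*α - e₁ := by
    rw [he₁def]; split_ifs with h1 h2
    · linarith
    · linarith
    · linarith [hγdef]
  obtain ⟨c₁, hc₁0, hc₁⟩ := pow_int_bound (-(2*γ)) (2*e₁) (by linarith)
    (by rw [he₁def]; split_ifs with h1 h2
        · linarith
        · linarith
        · push_neg at h1; linarith)
    (by intro h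
        have h2γ : 2*γ = 1 := by linarith
        have : e₁ = ε := by rw [he₁def, if_neg (by linarith), if_pos h2γ]
        linarith)
  set e₃ : ℝ := if β < 3/2 then 0 else if β = 3/2 then ε else β - 3/2 with he₃def
  have he₃0 : 0 ≤ e₃ := by
    rw [he₃def]; split_ifs with h1 h2
    · exact le_refl 0
    · exact hε.le
    · push_neg at h1; linarith [lt_of_le_of_ne h1 (Ne.symm h2)]
  have he₃strict : -1 < 2*β - e₃ := by
    rw [he₃def]; split_ifs with h1 h2
    · linarith
    · linarith
    · linarith
  have hfin : 0 ≤ 2*β - ν - 2*e₃ := by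
    rw [he₃def]; split_ifs with h1 h2
    · linarith
    · linarith
    · linarith
  obtain ⟨c₃, hc₃0, hc₃⟩ := pow_int_bound (α - e₁) e₃ he₃0
    (by rw [he₁def, he₃def]
        split_ifs <;> linarith [hγdef])
    (by intro h
        have hβ32 : β = 3/2 := by
          rw [he₁def] at h; split_ifs at h with h1 h2
          · linarith
          · linarith
          · linarith [hγdef]
        rw [he₃def, if_neg (by linarith), if_pos hβ32]; exact hε)
  obtain ⟨c₄, hc₄0, hc₄⟩ := pow_int_bound (2*α - e₁) 0 le_rfl (by linarith)
    (by intro h; linarith)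
  obtain ⟨c₅, hc₅0, hc₅⟩ := pow_int_bound (2*α) 0 le_rfl (by linarith)
    (by intro h; linarith)
  obtain ⟨c₆, hc₆0, hc₆⟩ := pow_int_bound (2*β - e₃) 0 le_rfl (by linarith)
    (by intro h; linarith)
  obtain ⟨c₇, hc₇0, hc₇⟩ := pow_int_bound (2*β) 0 le_rfl (by linarith)
    (by intro h; linarith)
  set K₁ : ℝ := 2^(2*α+1) * Real.sqrt c₁ * (c₄ * 2^e₁ + c₅) with hK₁def
  have hK₁0 : 0 < K₁ := by
    have h1 : (0:ℝ) < Real.sqrt c₁ := Real.sqrt_pos.mpr hc₁0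
    have h2 : (0:ℝ) < (2:ℝ)^(2*α+1) := rpow_pos_of_pos (by norm_num) _
    have h3 : (0:ℝ) < (2:ℝ)^e₁ := rpow_pos_of_pos (by norm_num) _
    positivity
  set K₂ : ℝ := 2^(2*β+1) * c₃ * (c₆ * 2^e₃ + c₇) * K₁ with hK₂def
  have hK₂0 : 0 < K₂ := by
    have h2 : (0:ℝ) < (2:ℝ)^(2*β+1) := rpow_pos_of_pos (by norm_num) _
    have h3 : (0:ℝ) < (2:ℝ)^e₃ := rpow_pos_of_pos (by norm_num) _
    positivity
  set Cs : ℝ := K₂^2 * 2^(2*β - ν - 2*e₃) with hCsdef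
  have hCs0 : 0 < Cs := by
    have h2 : (0:ℝ) < (2:ℝ)^(2*β - ν - 2*e₃) := rpow_pos_of_pos (by norm_num) _
    positivity
  set Cl : ℝ := 2^(2*α) * 2^(2*β - ν) with hCldef
  have hCl0 : 0 < Cl :=
    mul_pos (rpow_pos_of_pos (by norm_num) _) (rpow_pos_of_pos (by norm_num) _)
  refine ⟨Cs + Cl, by linarith, ?_⟩
  intro b hb u hu hint1 hint2
  have hb1 : b < b + 1 := by linarith
  have hI : ∀ ⦃x⦄, x ∈ Set.Icc b (b+1) → 0 < x := fun x hx => lt_of_lt_of_le hb hx.1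
  have hIuD : UniqueDiffOn ℝ (Set.Icc b (b+1)) := uniqueDiffOn_Icc hb1
  have hpow : ∀ p : ℝ, ContDiffOn ℝ 2 (fun t : ℝ => t ^ p) (Set.Icc b (b+1)) :=
    fun p x hx => (Real.contDiffAt_rpow_const_of_ne (hI hx).ne').contDiffWithinAt
  set v : ℝ → ℝ := fun t => u t / t ^ β with hvdef
  have hv : ContDiffOn ℝ 2 v (Set.Icc b (b+1)) :=
    hu.div (hpow β) (fun x hx => (rpow_pos_of_pos (hI hx) β).ne')
  have hvcont : ContinuousOn v (Set.Icc b (b+1)) := hv.continuousOn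
  set v1 : ℝ → ℝ := derivWithin v (Set.Icc b (b+1)) with hv1def
  have hv1 : ContDiffOn ℝ 1 v1 (Set.Icc b (b+1)) :=
    hv.derivWithin hIuD (by norm_num)
  have hv1cont : ContinuousOn v1 (Set.Icc b (b+1)) := hv1.continuousOn
  have hvd : ∀ s ∈ Set.Ioo b (b+1), HasDerivAt v (v1 s) s := by
    intro s hs
    have hmem : Set.Icc b (b+1) ∈ 𝓝 s := Icc_mem_nhds hs.1 hs.2
    have h2 : DifferentiableAt ℝ v s :=
      (hv.contDiffAt hmem).differentiableAt (by norm_num)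
    have h3 := h2.hasDerivAt
    rwa [← derivWithin_of_mem_nhds hmem] at h3
  have hvIoo : ∀ s ∈ Set.Ioo b (b+1), deriv v s = v1 s :=
    fun s hs => (derivWithin_of_mem_nhds (Icc_mem_nhds hs.1 hs.2)).symm
  set w1 : ℝ → ℝ := fun s => v1 s / s ^ α with hw1def
  have hw1 : ContDiffOn ℝ 1 w1 (Set.Icc b (b+1)) :=
    hv1.div ((hpow α).of_le one_le_two) (fun x hx => (rpow_pos_of_pos (hI hx) α).ne')
  have hw1cont : ContinuousOn w1 (Set.Icc b (b+1)) := hw1.continuousOn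
  set g1 : ℝ → ℝ := derivWithin w1 (Set.Icc b (b+1)) with hg1def
  have hg1cont : ContinuousOn g1 (Set.Icc b (b+1)) :=
    hw1.continuousOn_derivWithin hIuD (le_refl 1)
  have hwd : ∀ s ∈ Set.Ioo b (b+1), HasDerivAt w1 (g1 s) s := by
    intro s hs
    have hmem : Set.Icc b (b+1) ∈ 𝓝 s := Icc_mem_nhds hs.1 hs.2
    have h2 : DifferentiableAt ℝ w1 s :=
      (hw1.contDiffAt hmem).differentiableAt one_ne_zero
    have h3 := h2.hasDerivAt
    rwa [← derivWithin_of_mem_nhds hmem] at h3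
  have hv1w : ∀ s ∈ Set.Icc b (b+1), v1 s = w1 s * s ^ α :=
    fun s hs => (div_mul_cancel₀ _ (rpow_pos_of_pos (hI hs) α).ne').symm
  have hgg1 : ∀ x ∈ Set.Ioo b (b+1),
      deriv (fun s : ℝ => deriv v s / s ^ α) x = g1 x := by
    intro x hx
    have hev : (fun s : ℝ => deriv v s / s ^ α) =ᶠ[𝓝 x] w1 := by
      filter_upwards [Ioo_mem_nhds hx.1 hx.2] with s hs
      rw [hw1def]; simp only [hvIoo s hs]
    rw [hev.deriv_eq, (hwd x hx).deriv]
  have haes : ∀ᵐ x : ℝ ∂volume, x ≠ b+1 := by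
    rw [MeasureTheory.ae_iff]
    have : {x : ℝ | ¬ x ≠ b+1} = {b+1} := by ext t; simp
    rw [this]; exact measure_singleton _
  have hIocIoo : ∀ x : ℝ, x ∈ Set.uIoc b (b+1) → x ≠ b+1 → x ∈ Set.Ioo b (b+1) := by
    intro x hx hne
    rw [Set.uIoc_of_le hb1.le] at hx
    exact ⟨hx.1, lt_of_le_of_ne hx.2 hne⟩
  have hpowcont : ∀ p : ℝ, ContinuousOn (fun τ : ℝ => τ ^ p) (Set.Icc b (b+1)) :=
    fun p => continuousOn_id.rpow_const (fun τ hτ => Or.inl (hI hτ).ne')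
  have hpowint : ∀ p : ℝ, ∀ z x : ℝ, z ∈ Set.Icc b (b+1) → x ∈ Set.Icc b (b+1) →
      IntervalIntegrable (fun τ : ℝ => τ ^ p) volume z x := by
    intro p z x hz hx
    apply ContinuousOn.intervalIntegrable
    apply (hpowcont p).mono
    exact Set.uIcc_subset_Icc hz hx
  have hD2eq : (∫ x in b..b+1, (deriv (fun s : ℝ => deriv v s / s ^ α) x)^2 * x^(2*γ))
      = ∫ x in b..b+1, (g1 x)^2 * x^(2*γ) := by
    apply intervalIntegral.integral_congr_ae
    filter_upwards [haes] with x hxne hxI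
    rw [hgg1 x (hIocIoo x hxI hxne)]
  have hW0 : (∫ x in b..b+1, w1 x * x^(2*α)) = 0 := by
    have heq : (∫ x in b..b+1, deriv v x * x^α) = ∫ x in b..b+1, w1 x * x^(2*α) := by
      apply intervalIntegral.integral_congr_ae
      filter_upwards [haes] with x hxne hxI
      have hxIoo := hIocIoo x hxI hxne
      have hx0 : 0 < x := hI (Set.Ioo_subset_Icc_self hxIoo)
      rw [hvIoo x hxIoo, hv1w x (Set.Ioo_subset_Icc_self hxIoo), mul_assoc,
        ← Real.rpow_add hx0, two_mul]
    rw [← heq]; exact hint2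
  have hV0 : (∫ x in b..b+1, v x * x^(2*β)) = 0 := by
    have heq : (∫ x in b..b+1, u x * x^β) = ∫ x in b..b+1, v x * x^(2*β) := by
      apply intervalIntegral.integral_congr
      intro x hx
      have hx0 : 0 < x := hI (by rwa [Set.uIcc_of_le hb1.le] at hx)
      have huv : v x * x^β = u x := div_mul_cancel₀ _ (rpow_pos_of_pos hx0 β).ne'
      simp only [← huv, mul_assoc, ← Real.rpow_add hx0, two_mul]
    rw [← heq]; exact hint1
  have hFTCw : ∀ z x : ℝ, z ∈ Set.Icc b (b+1) → x ∈ Set.Icc b (b+1) → z ≤ x →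
      w1 x - w1 z = ∫ σ in z..x, g1 σ := by
    intro z x hz hx hzx
    have hsub : Set.Icc z x ⊆ Set.Icc b (b+1) := Set.Icc_subset_Icc hz.1 hx.2
    have husub : Set.uIcc z x ⊆ Set.Icc b (b+1) := by
      rw [Set.uIcc_of_le hzx]; exact hsub
    exact (intervalIntegral.integral_eq_sub_of_hasDerivAt_of_le hzx
      (hw1cont.mono hsub)
      (fun s hs => hwd s ⟨lt_of_le_of_lt hz.1 hs.1, lt_of_lt_of_le hs.2 hx.2⟩)
      ((hg1cont.mono husub).intervalIntegrable)).symm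
  have hFTCv : ∀ t y : ℝ, t ∈ Set.Icc b (b+1) → y ∈ Set.Icc b (b+1) → t ≤ y →
      v y - v t = ∫ s in t..y, w1 s * s^α := by
    intro t y ht hy hty
    have hsub : Set.Icc t y ⊆ Set.Icc b (b+1) := Set.Icc_subset_Icc ht.1 hy.2
    have husub : Set.uIcc t y ⊆ Set.Icc b (b+1) := by
      rw [Set.uIcc_of_le hty]; exact hsub
    have h1 := (intervalIntegral.integral_eq_sub_of_hasDerivAt_of_le hty
      (hvcont.mono hsub)
      (fun s hs => hvd s ⟨lt_of_le_of_lt ht.1 hs.1, lt_of_lt_of_le hs.2 hy.2⟩)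
      ((hv1cont.mono husub).intervalIntegrable)).symm
    rw [h1]
    exact intervalIntegral.integral_congr (fun s hs => hv1w s (husub hs))
  set D2 : ℝ := ∫ x in b..b+1, (g1 x)^2 * x^(2*γ) with hD2def
  have hD2nn : 0 ≤ D2 := intervalIntegral.integral_nonneg hb1.le (fun σ hσ => by
    have hσ0 : 0 < σ := hI hσ
    positivity)
  set D : ℝ := Real.sqrt D2 with hDdef
  have hD0 : 0 ≤ D := Real.sqrt_nonneg _
  have hDD : D^2 = D2 := Real.sq_sqrt hD2nn
  have hrsq : ∀ x p : ℝ, 0 < x → (x ^ p)^2 = x ^ (2*p) := by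
    intro x p hx
    rw [sq, ← Real.rpow_add hx, two_mul]
  have hCS : ∀ z x : ℝ, z ∈ Set.Icc b (b+1) → x ∈ Set.Icc b (b+1) → z ≤ x →
      |w1 x - w1 z| ≤ D * Real.sqrt (∫ σ in z..x, σ^(-(2*γ))) := by
    intro z x hz hx hzx
    have hsub : Set.Icc z x ⊆ Set.Icc b (b+1) := Set.Icc_subset_Icc hz.1 hx.2
    have hposzx : ∀ σ ∈ Set.Icc z x, 0 < σ := fun σ hσ => hI (hsub hσ)
    have hcontg : ContinuousOn (fun σ => |g1 σ| * σ^γ) (Set.Icc z x) :=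
      (hg1cont.mono hsub).abs.mul
        (continuousOn_id.rpow_const (fun σ hσ => Or.inl (hposzx σ hσ).ne'))
    have hcontp : ContinuousOn (fun σ : ℝ => σ^(-γ)) (Set.Icc z x) :=
      continuousOn_id.rpow_const (fun σ hσ => Or.inl (hposzx σ hσ).ne')
    rw [hFTCw z x hz hx hzx]
    have h1 : |∫ σ in z..x, g1 σ| ≤ ∫ σ in z..x, |g1 σ| :=
      intervalIntegral.abs_integral_le_integral_abs hzx
    have h2 : (∫ σ in z..x, |g1 σ|) = ∫ σ in z..x, (|g1 σ| * σ^γ) * σ^(-γ) := by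
      apply intervalIntegral.integral_congr
      intro σ hσ
      have hσ0 : 0 < σ := hposzx σ (by rwa [Set.uIcc_of_le hzx] at hσ)
      show |g1 σ| = |g1 σ| * σ ^ γ * σ ^ (-γ)
      rw [mul_assoc, ← Real.rpow_add hσ0]
      simp
    have h3 := interval_CS z x hzx _ _ hcontg hcontp
    have h4 : (∫ σ in z..x, (|g1 σ| * σ^γ)^2) ≤ D2 := by
      have heq : (∫ σ in z..x, (|g1 σ| * σ^γ)^2) = ∫ σ in z..x, (g1 σ)^2 * σ^(2*γ) := by
        apply intervalIntegral.integral_congr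
        intro σ hσ
        have hσ0 : 0 < σ := hposzx σ (by rwa [Set.uIcc_of_le hzx] at hσ)
        show (|g1 σ| * σ ^ γ)^2 = (g1 σ)^2 * σ^(2*γ)
        rw [mul_pow, sq_abs, hrsq σ γ hσ0]
      rw [heq, hD2def]
      apply intervalIntegral.integral_mono_interval hz.1 hzx hx.2
      · refine (MeasureTheory.ae_restrict_iff' measurableSet_Ioc).mpr (MeasureTheory.ae_of_all _ ?_)
        intro σ hσ
        have hσ0 : 0 < σ := lt_trans hb hσ.1
        positivity
      · apply ContinuousOn.intervalIntegrable
        apply ContinuousOn.mono _ (Set.uIcc_subset_Icc (Set.left_mem_Icc.mpr hb1.le)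
          (Set.right_mem_Icc.mpr hb1.le))
        exact (hg1cont.pow 2).mul (hpowcont (2*γ))
    have h5 : (∫ σ in z..x, (σ^(-γ))^2) = ∫ σ in z..x, σ^(-(2*γ)) := by
      apply intervalIntegral.integral_congr
      intro σ hσ
      have hσ0 : 0 < σ := hposzx σ (by rwa [Set.uIcc_of_le hzx] at hσ)
      show (σ ^ (-γ))^2 = σ ^ (-(2*γ))
      rw [hrsq σ (-γ) hσ0]
      ring_nf
    calc |∫ σ in z..x, g1 σ| ≤ ∫ σ in z..x, |g1 σ| := h1
      _ = ∫ σ in z..x, (|g1 σ| * σ^γ) * σ^(-γ) := h2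
      _ ≤ Real.sqrt (∫ σ in z..x, (|g1 σ| * σ^γ)^2) * Real.sqrt (∫ σ in z..x, (σ^(-γ))^2) := h3
      _ ≤ D * Real.sqrt (∫ σ in z..x, σ^(-(2*γ))) := by
          rw [h5]
          apply mul_le_mul_of_nonneg_right _ (Real.sqrt_nonneg _)
          rw [hDdef]
          exact Real.sqrt_le_sqrt h4
  have hMlow : ∀ p : ℝ, 0 ≤ p → (2:ℝ)^(-p-1) ≤ ∫ τ in b..b+1, τ^p := by
    intro p hp
    have hbm : b ∈ Set.Icc b (b+1) := Set.left_mem_Icc.mpr hb1.le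
    have hbm1 : b+1 ∈ Set.Icc b (b+1) := Set.right_mem_Icc.mpr hb1.le
    have hbm2 : b+1/2 ∈ Set.Icc b (b+1) := ⟨by linarith, by linarith⟩
    have hsplit : (∫ τ in b..b+1, τ^p)
        = (∫ τ in b..b+1/2, τ^p) + ∫ τ in (b+1/2)..(b+1), τ^p :=
      (intervalIntegral.integral_add_adjacent_intervals
        (hpowint p b (b+1/2) hbm hbm2) (hpowint p (b+1/2) (b+1) hbm2 hbm1)).symm
    have hpos1 : 0 ≤ ∫ τ in b..b+1/2, τ^p :=
      intervalIntegral.integral_nonneg (by linarith)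
        (fun σ hσ => Real.rpow_nonneg (le_trans hb.le hσ.1) _)
    have hconst : (∫ τ in (b+1/2)..(b+1), (2:ℝ)^(-p)) = (1/2) * 2^(-p) := by
      rw [intervalIntegral.integral_const, smul_eq_mul]
      norm_num
    have hmono : (∫ τ in (b+1/2)..(b+1), (2:ℝ)^(-p)) ≤ ∫ τ in (b+1/2)..(b+1), τ^p := by
      apply intervalIntegral.integral_mono_on (by linarith)
        intervalIntegrable_const (hpowint p (b+1/2) (b+1) hbm2 hbm1)
      intro τ hτ
      have h1 : (2:ℝ)⁻¹ ≤ τ := by have := hτ.1; linarith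
      have h2 : ((2:ℝ)⁻¹)^p ≤ τ^p := Real.rpow_le_rpow (by norm_num) h1 hp
      rwa [← Real.rpow_neg_one, ← Real.rpow_mul (by norm_num), neg_one_mul] at h2
    have hfinal : (2:ℝ)^(-p-1) = (1/2) * 2^(-p) := by
      rw [show -p-1 = -p + (-1) by ring, Real.rpow_add two_pos, Real.rpow_neg_one]
      ring
    rw [hsplit, hfinal]
    linarith
  have hMpos : ∀ p : ℝ, 0 ≤ p → 0 < ∫ τ in b..b+1, τ^p :=
    fun p hp => lt_of_lt_of_le (rpow_pos_of_pos two_pos _) (hMlow p hp)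
  have havg : ∀ (p : ℝ) (f K : ℝ → ℝ), 0 ≤ p →
      ContinuousOn f (Set.Icc b (b+1)) → ContinuousOn K (Set.Icc b (b+1)) →
      (∫ τ in b..b+1, f τ * τ^p) = 0 → ∀ s ∈ Set.Icc b (b+1),
      (∀ τ ∈ Set.Icc b (b+1), |f s - f τ| ≤ K τ) →
      |f s| * (∫ τ in b..b+1, τ^p) ≤ ∫ τ in b..b+1, K τ * τ^p := by
    intro p f K hp hf hK hf0 s hs hKb
    have huIcc : Set.uIcc b (b+1) = Set.Icc b (b+1) := Set.uIcc_of_le hb1.le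
    have hif : IntervalIntegrable (fun τ => f τ * τ^p) volume b (b+1) :=
      ((huIcc ▸ hf).mul (huIcc ▸ (hpowcont p))).intervalIntegrable
    have hifs : IntervalIntegrable (fun τ => f s * τ^p) volume b (b+1) :=
      (continuousOn_const.mul (huIcc ▸ (hpowcont p))).intervalIntegrable
    have e1 : f s * (∫ τ in b..b+1, τ^p) = ∫ τ in b..b+1, (f s - f τ) * τ^p := by
      have e2 : (∫ τ in b..b+1, (f s - f τ) * τ^p)
          = (∫ τ in b..b+1, f s * τ^p) - ∫ τ in b..b+1, f τ * τ^p := by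
        rw [← intervalIntegral.integral_sub hifs hif]
        apply intervalIntegral.integral_congr
        intro τ _
        ring
      rw [e2, hf0, sub_zero, intervalIntegral.integral_const_mul]
    have hMnn : 0 ≤ ∫ τ in b..b+1, τ^p := (hMpos p hp).le
    calc |f s| * (∫ τ in b..b+1, τ^p) = |f s * ∫ τ in b..b+1, τ^p| := by
          rw [abs_mul, abs_of_nonneg hMnn]
      _ = |∫ τ in b..b+1, (f s - f τ) * τ^p| := by rw [e1]
      _ ≤ ∫ τ in b..b+1, |(f s - f τ) * τ^p| :=
          intervalIntegral.abs_integral_le_integral_abs hb1.le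
      _ ≤ ∫ τ in b..b+1, K τ * τ^p := by
          apply intervalIntegral.integral_mono_on hb1.le
          · exact (((continuousOn_const.sub (huIcc ▸ hf)).mul
              (huIcc ▸ (hpowcont p))).abs).intervalIntegrable
          · exact ((huIcc ▸ hK).mul (huIcc ▸ (hpowcont p))).intervalIntegrable
          · intro τ hτ
            rw [abs_mul, abs_of_nonneg (Real.rpow_nonneg (hI hτ).le p)]
            exact mul_le_mul_of_nonneg_right (hKb τ hτ) (Real.rpow_nonneg (hI hτ).le p)
  rcases lt_or_ge b 1 with hbs | hbl
  · -- small b : b < 1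
    have hle2 : ∀ x ∈ Set.Icc b (b+1), x ≤ 2 := fun x hx => le_trans hx.2 (by linarith)
    have hsqrtc₁ : ∀ m : ℝ, 0 < m →
        Real.sqrt (c₁ * m^(-(2*e₁))) = Real.sqrt c₁ * m^(-e₁) := by
      intro m hm
      rw [Real.sqrt_mul hc₁0.le]
      congr 1
      rw [show -(2*e₁) = 2*(-e₁) by ring, ← hrsq m (-e₁) hm]
      exact Real.sqrt_sq (Real.rpow_nonneg hm.le _)
    have hwbound : ∀ s ∈ Set.Icc b (b+1), |w1 s| ≤ K₁ * D * s^(-e₁) := by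
      intro s hs
      have hs0 : 0 < s := hI hs
      set Kf : ℝ → ℝ := fun τ => D * Real.sqrt c₁ * (min τ s)^(-e₁) with hKfdef
      have hKfcont : ContinuousOn Kf (Set.Icc b (b+1)) := by
        apply ContinuousOn.mul continuousOn_const
        apply ContinuousOn.rpow_const ((continuous_id.min continuous_const).continuousOn)
        intro τ hτ; exact Or.inl (lt_min (hI hτ) hs0).ne'
      have hKb : ∀ τ ∈ Set.Icc b (b+1), |w1 s - w1 τ| ≤ Kf τ := by
        intro τ hτ
        have hτ0 : 0 < τ := hI hτ
        rcases le_total τ s with hts | hst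
        · have h1 := hCS τ s hτ hs hts
          have h2 : Real.sqrt (∫ σ in τ..s, σ^(-(2*γ))) ≤ Real.sqrt (c₁ * τ^(-(2*e₁))) :=
            Real.sqrt_le_sqrt (hc₁ τ s hτ0 hts (hle2 s hs))
          calc |w1 s - w1 τ| ≤ D * Real.sqrt (∫ σ in τ..s, σ^(-(2*γ))) := h1
            _ ≤ D * Real.sqrt (c₁ * τ^(-(2*e₁))) := mul_le_mul_of_nonneg_left h2 hD0
            _ = Kf τ := by rw [hKfdef]; simp only [min_eq_left hts, hsqrtc₁ τ hτ0]; ring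
        · have h1 := hCS s τ hs hτ hst
          have h2 : Real.sqrt (∫ σ in s..τ, σ^(-(2*γ))) ≤ Real.sqrt (c₁ * s^(-(2*e₁))) :=
            Real.sqrt_le_sqrt (hc₁ s τ hs0 hst (hle2 τ hτ))
          rw [abs_sub_comm]
          calc |w1 τ - w1 s| ≤ D * Real.sqrt (∫ σ in s..τ, σ^(-(2*γ))) := h1
            _ ≤ D * Real.sqrt (c₁ * s^(-(2*e₁))) := mul_le_mul_of_nonneg_left h2 hD0
            _ = Kf τ := by rw [hKfdef]; simp only [min_eq_right hst, hsqrtc₁ s hs0]; ring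
      have h2 := havg (2*α) w1 Kf (by positivity) hw1cont hKfcont hW0 s hs hKb
      have hs2 : (2:ℝ)^(-e₁) ≤ s^(-e₁) :=
        rpow_le_rpow_of_nonpos hs0 (hle2 s hs) (neg_nonpos.mpr he₁0)
      have h2e : (2:ℝ)^e₁ * (2:ℝ)^(-e₁) = 1 := by
        rw [← Real.rpow_add two_pos]; norm_num
      have h2ep : (0:ℝ) < (2:ℝ)^e₁ := rpow_pos_of_pos two_pos _
      have hse : (0:ℝ) ≤ s^(-e₁) := Real.rpow_nonneg hs0.le _
      have h3 : (∫ τ in b..b+1, Kf τ * τ^(2*α))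
          ≤ D * Real.sqrt c₁ * ((c₄ * 2^e₁ + c₅) * s^(-e₁)) := by
        have hDc : (0:ℝ) ≤ D * Real.sqrt c₁ := mul_nonneg hD0 (Real.sqrt_nonneg _)
        have hmono : (∫ τ in b..b+1, Kf τ * τ^(2*α))
            ≤ ∫ τ in b..b+1, D * Real.sqrt c₁ * (τ^(2*α-e₁) + s^(-e₁) * τ^(2*α)) := by
          apply intervalIntegral.integral_mono_on hb1.le
          · apply ContinuousOn.intervalIntegrable
            apply ContinuousOn.mono (hKfcont.mul (hpowcont (2*α)))
            rw [Set.uIcc_of_le hb1.le]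
          · apply ContinuousOn.intervalIntegrable
            apply ContinuousOn.mono (ContinuousOn.mul continuousOn_const
              ((hpowcont (2*α-e₁)).add (continuousOn_const.mul (hpowcont (2*α)))))
            rw [Set.uIcc_of_le hb1.le]
          · intro τ hτ
            have hτ0 : 0 < τ := hI hτ
            have hmin : (min τ s)^(-e₁) ≤ τ^(-e₁) + s^(-e₁) := by
              rcases min_cases τ s with ⟨hm, _⟩ | ⟨hm, _⟩ <;> rw [hm]
              · linarith [Real.rpow_nonneg hs0.le (-e₁)]
              · linarith [Real.rpow_nonneg hτ0.le (-e₁)]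
            calc Kf τ * τ^(2*α) = D * Real.sqrt c₁ * ((min τ s)^(-e₁) * τ^(2*α)) := by
                  rw [hKfdef]; ring
              _ ≤ D * Real.sqrt c₁ * ((τ^(-e₁) + s^(-e₁)) * τ^(2*α)) := by
                  apply mul_le_mul_of_nonneg_left _ hDc
                  exact mul_le_mul_of_nonneg_right hmin (Real.rpow_nonneg hτ0.le _)
              _ = D * Real.sqrt c₁ * (τ^(2*α-e₁) + s^(-e₁) * τ^(2*α)) := by
                  rw [add_mul, ← Real.rpow_add hτ0,
                    show -e₁ + 2*α = 2*α - e₁ by ring]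
        have hsplit : (∫ τ in b..b+1, D * Real.sqrt c₁ * (τ^(2*α-e₁) + s^(-e₁) * τ^(2*α)))
            = D * Real.sqrt c₁ * ((∫ τ in b..b+1, τ^(2*α-e₁))
              + s^(-e₁) * ∫ τ in b..b+1, τ^(2*α)) := by
          rw [intervalIntegral.integral_const_mul, intervalIntegral.integral_add
            (hpowint (2*α-e₁) b (b+1) (Set.left_mem_Icc.mpr hb1.le) (Set.right_mem_Icc.mpr hb1.le))
            ((hpowint (2*α) b (b+1) (Set.left_mem_Icc.mpr hb1.le)
              (Set.right_mem_Icc.mpr hb1.le)).const_mul _),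
            intervalIntegral.integral_const_mul]
        have hb2 : b + 1 ≤ 2 := by linarith
        have hi1 : (∫ τ in b..b+1, τ^(2*α-e₁)) ≤ c₄ := by
          have := hc₄ b (b+1) hb hb1.le hb2
          rwa [neg_zero, Real.rpow_zero, mul_one] at this
        have hi2 : (∫ τ in b..b+1, τ^(2*α)) ≤ c₅ := by
          have := hc₅ b (b+1) hb hb1.le hb2
          rwa [neg_zero, Real.rpow_zero, mul_one] at this
        have hi1nn : 0 ≤ ∫ τ in b..b+1, τ^(2*α-e₁) :=
          intervalIntegral.integral_nonneg hb1.le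
            (fun σ hσ => Real.rpow_nonneg (hI hσ).le _)
        have hkey : (∫ τ in b..b+1, τ^(2*α-e₁)) + s^(-e₁) * (∫ τ in b..b+1, τ^(2*α))
            ≤ (c₄ * 2^e₁ + c₅) * s^(-e₁) := by
          have k1 : (∫ τ in b..b+1, τ^(2*α-e₁)) ≤ c₄ * 2^e₁ * s^(-e₁) := by
            have k2 : (1:ℝ) ≤ 2^e₁ * s^(-e₁) := by
              calc (1:ℝ) = 2^e₁ * 2^(-e₁) := h2e.symm
                _ ≤ 2^e₁ * s^(-e₁) := mul_le_mul_of_nonneg_left hs2 h2ep.le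
            calc (∫ τ in b..b+1, τ^(2*α-e₁)) = (∫ τ in b..b+1, τ^(2*α-e₁)) * 1 := by ring
              _ ≤ (∫ τ in b..b+1, τ^(2*α-e₁)) * (2^e₁ * s^(-e₁)) :=
                  mul_le_mul_of_nonneg_left k2 hi1nn
              _ ≤ c₄ * (2^e₁ * s^(-e₁)) :=
                  mul_le_mul_of_nonneg_right hi1 (mul_nonneg h2ep.le hse)
              _ = c₄ * 2^e₁ * s^(-e₁) := by ring
          have k3 : s^(-e₁) * (∫ τ in b..b+1, τ^(2*α)) ≤ c₅ * s^(-e₁) := by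
            calc s^(-e₁) * (∫ τ in b..b+1, τ^(2*α)) ≤ s^(-e₁) * c₅ :=
                  mul_le_mul_of_nonneg_left hi2 hse
              _ = c₅ * s^(-e₁) := mul_comm _ _
          linarith [k1, k3]
        calc (∫ τ in b..b+1, Kf τ * τ^(2*α))
            ≤ D * Real.sqrt c₁ * ((∫ τ in b..b+1, τ^(2*α-e₁))
              + s^(-e₁) * ∫ τ in b..b+1, τ^(2*α)) := by rw [← hsplit]; exact hmono
          _ ≤ D * Real.sqrt c₁ * ((c₄ * 2^e₁ + c₅) * s^(-e₁)) :=
              mul_le_mul_of_nonneg_left hkey hDc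
      have hml := hMlow (2*α) (by linarith)
      have h6 : |w1 s| * (2:ℝ)^(-(2*α)-1)
          ≤ D * Real.sqrt c₁ * ((c₄ * 2^e₁ + c₅) * s^(-e₁)) :=
        le_trans (mul_le_mul_of_nonneg_left hml (abs_nonneg _)) (h2.trans h3)
      have h7 : (2:ℝ)^(-(2*α)-1) * (2:ℝ)^(2*α+1) = 1 := by
        rw [← Real.rpow_add two_pos]; norm_num
      calc |w1 s| = (|w1 s| * (2:ℝ)^(-(2*α)-1)) * (2:ℝ)^(2*α+1) := by
            rw [mul_assoc, h7, mul_one]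
        _ ≤ (D * Real.sqrt c₁ * ((c₄ * 2^e₁ + c₅) * s^(-e₁))) * (2:ℝ)^(2*α+1) :=
            mul_le_mul_of_nonneg_right h6 (Real.rpow_nonneg two_pos.le _)
        _ = K₁ * D * s^(-e₁) := by rw [hK₁def]; ring
    have hvbound : ∀ y ∈ Set.Icc b (b+1), |v y| ≤ K₂ * D * y^(-e₃) := by
      intro y hy
      have hy0 : 0 < y := hI hy
      have hKD : (0:ℝ) ≤ K₁ * D := mul_nonneg hK₁0.le hD0
      set Lf : ℝ → ℝ := fun t => K₁ * D * c₃ * (min t y)^(-e₃) with hLfdef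
      have hLfcont : ContinuousOn Lf (Set.Icc b (b+1)) := by
        apply ContinuousOn.mul continuousOn_const
        apply ContinuousOn.rpow_const ((continuous_id.min continuous_const).continuousOn)
        intro t ht; exact Or.inl (lt_min (hI ht) hy0).ne'
      have hdiffb : ∀ t yy : ℝ, t ∈ Set.Icc b (b+1) → yy ∈ Set.Icc b (b+1) → t ≤ yy →
          |∫ s in t..yy, w1 s * s^α| ≤ K₁ * D * (c₃ * t^(-e₃)) := by
        intro t yy ht hyy htyy
        have ht0 : 0 < t := hI ht
        calc |∫ s in t..yy, w1 s * s^α| ≤ ∫ s in t..yy, |w1 s * s^α| :=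
              intervalIntegral.abs_integral_le_integral_abs htyy
          _ ≤ ∫ s in t..yy, K₁ * D * s^(α - e₁) := by
              apply intervalIntegral.integral_mono_on htyy
              · apply ContinuousOn.intervalIntegrable
                apply ContinuousOn.mono ((hw1cont.mul (hpowcont α)).abs)
                exact Set.uIcc_subset_Icc ht hyy
              · apply ContinuousOn.intervalIntegrable
                apply ContinuousOn.mono (continuousOn_const.mul (hpowcont (α - e₁)))
                exact Set.uIcc_subset_Icc ht hyy
              · intro s hs
                have hsI : s ∈ Set.Icc b (b+1) := ⟨le_trans ht.1 hs.1, le_trans hs.2 hyy.2⟩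
                have hs0 : 0 < s := hI hsI
                rw [abs_mul, abs_of_nonneg (Real.rpow_nonneg hs0.le α)]
                calc |w1 s| * s^α ≤ (K₁ * D * s^(-e₁)) * s^α :=
                      mul_le_mul_of_nonneg_right (hwbound s hsI) (Real.rpow_nonneg hs0.le _)
                  _ = K₁ * D * s^(α - e₁) := by
                      rw [mul_assoc, ← Real.rpow_add hs0, show -e₁ + α = α - e₁ by ring]
          _ = K₁ * D * ∫ s in t..yy, s^(α - e₁) := intervalIntegral.integral_const_mul _ _
          _ ≤ K₁ * D * (c₃ * t^(-e₃)) :=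
              mul_le_mul_of_nonneg_left (hc₃ t yy ht0 htyy (hle2 yy hyy)) hKD
      have hLb : ∀ t ∈ Set.Icc b (b+1), |v y - v t| ≤ Lf t := by
        intro t ht
        have ht0 : 0 < t := hI ht
        rcases le_total t y with hty | hyt
        · rw [hFTCv t y ht hy hty]
          have := hdiffb t y ht hy hty
          rw [hLfdef]
          simp only [min_eq_left hty]
          calc |∫ s in t..y, w1 s * s^α| ≤ K₁ * D * (c₃ * t^(-e₃)) := this
            _ = K₁ * D * c₃ * t^(-e₃) := by ring
        · rw [show v y - v t = -(v t - v y) by ring, abs_neg, hFTCv y t hy ht hyt]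
          have := hdiffb y t hy ht hyt
          rw [hLfdef]
          simp only [min_eq_right hyt]
          calc |∫ s in y..t, w1 s * s^α| ≤ K₁ * D * (c₃ * y^(-e₃)) := this
            _ = K₁ * D * c₃ * y^(-e₃) := by ring
      have h2 := havg (2*β) v Lf (by positivity) hvcont hLfcont hV0 y hy hLb
      have hy2 : (2:ℝ)^(-e₃) ≤ y^(-e₃) :=
        rpow_le_rpow_of_nonpos hy0 (hle2 y hy) (neg_nonpos.mpr he₃0)
      have h2e : (2:ℝ)^e₃ * (2:ℝ)^(-e₃) = 1 := by
        rw [← Real.rpow_add two_pos]; norm_num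
      have h2ep : (0:ℝ) < (2:ℝ)^e₃ := rpow_pos_of_pos two_pos _
      have hye : (0:ℝ) ≤ y^(-e₃) := Real.rpow_nonneg hy0.le _
      have hKDc : (0:ℝ) ≤ K₁ * D * c₃ := mul_nonneg hKD hc₃0.le
      have h3 : (∫ t in b..b+1, Lf t * t^(2*β))
          ≤ K₁ * D * c₃ * ((c₆ * 2^e₃ + c₇) * y^(-e₃)) := by
        have hmono : (∫ t in b..b+1, Lf t * t^(2*β))
            ≤ ∫ t in b..b+1, K₁ * D * c₃ * (t^(2*β-e₃) + y^(-e₃) * t^(2*β)) := by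
          apply intervalIntegral.integral_mono_on hb1.le
          · apply ContinuousOn.intervalIntegrable
            apply ContinuousOn.mono (hLfcont.mul (hpowcont (2*β)))
            rw [Set.uIcc_of_le hb1.le]
          · apply ContinuousOn.intervalIntegrable
            apply ContinuousOn.mono (ContinuousOn.mul continuousOn_const
              ((hpowcont (2*β-e₃)).add (continuousOn_const.mul (hpowcont (2*β)))))
            rw [Set.uIcc_of_le hb1.le]
          · intro t ht
            have ht0 : 0 < t := hI ht
            have hmin : (min t y)^(-e₃) ≤ t^(-e₃) + y^(-e₃) := by
              rcases min_cases t y with ⟨hm, _⟩ | ⟨hm, _⟩ <;> rw [hm]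
              · linarith [Real.rpow_nonneg hy0.le (-e₃)]
              · linarith [Real.rpow_nonneg ht0.le (-e₃)]
            calc Lf t * t^(2*β) = K₁ * D * c₃ * ((min t y)^(-e₃) * t^(2*β)) := by
                  rw [hLfdef]; ring
              _ ≤ K₁ * D * c₃ * ((t^(-e₃) + y^(-e₃)) * t^(2*β)) := by
                  apply mul_le_mul_of_nonneg_left _ hKDc
                  exact mul_le_mul_of_nonneg_right hmin (Real.rpow_nonneg ht0.le _)
              _ = K₁ * D * c₃ * (t^(2*β-e₃) + y^(-e₃) * t^(2*β)) := by
                  rw [add_mul, ← Real.rpow_add ht0,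
                    show -e₃ + 2*β = 2*β - e₃ by ring]
        have hsplit : (∫ t in b..b+1, K₁ * D * c₃ * (t^(2*β-e₃) + y^(-e₃) * t^(2*β)))
            = K₁ * D * c₃ * ((∫ t in b..b+1, t^(2*β-e₃))
              + y^(-e₃) * ∫ t in b..b+1, t^(2*β)) := by
          rw [intervalIntegral.integral_const_mul, intervalIntegral.integral_add
            (hpowint (2*β-e₃) b (b+1) (Set.left_mem_Icc.mpr hb1.le) (Set.right_mem_Icc.mpr hb1.le))
            ((hpowint (2*β) b (b+1) (Set.left_mem_Icc.mpr hb1.le)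
              (Set.right_mem_Icc.mpr hb1.le)).const_mul _),
            intervalIntegral.integral_const_mul]
        have hb2 : b + 1 ≤ 2 := by linarith
        have hi1 : (∫ t in b..b+1, t^(2*β-e₃)) ≤ c₆ := by
          have := hc₆ b (b+1) hb hb1.le hb2
          rwa [neg_zero, Real.rpow_zero, mul_one] at this
        have hi2 : (∫ t in b..b+1, t^(2*β)) ≤ c₇ := by
          have := hc₇ b (b+1) hb hb1.le hb2
          rwa [neg_zero, Real.rpow_zero, mul_one] at this
        have hi1nn : 0 ≤ ∫ t in b..b+1, t^(2*β-e₃) :=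
          intervalIntegral.integral_nonneg hb1.le
            (fun σ hσ => Real.rpow_nonneg (hI hσ).le _)
        have hkey : (∫ t in b..b+1, t^(2*β-e₃)) + y^(-e₃) * (∫ t in b..b+1, t^(2*β))
            ≤ (c₆ * 2^e₃ + c₇) * y^(-e₃) := by
          have k2 : (1:ℝ) ≤ 2^e₃ * y^(-e₃) := by
            calc (1:ℝ) = 2^e₃ * 2^(-e₃) := h2e.symm
              _ ≤ 2^e₃ * y^(-e₃) := mul_le_mul_of_nonneg_left hy2 h2ep.le
          have k1 : (∫ t in b..b+1, t^(2*β-e₃)) ≤ c₆ * 2^e₃ * y^(-e₃) := by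
            calc (∫ t in b..b+1, t^(2*β-e₃)) = (∫ t in b..b+1, t^(2*β-e₃)) * 1 := by ring
              _ ≤ (∫ t in b..b+1, t^(2*β-e₃)) * (2^e₃ * y^(-e₃)) :=
                  mul_le_mul_of_nonneg_left k2 hi1nn
              _ ≤ c₆ * (2^e₃ * y^(-e₃)) :=
                  mul_le_mul_of_nonneg_right hi1 (mul_nonneg h2ep.le hye)
              _ = c₆ * 2^e₃ * y^(-e₃) := by ring
          have k3 : y^(-e₃) * (∫ t in b..b+1, t^(2*β)) ≤ c₇ * y^(-e₃) := by
            calc y^(-e₃) * (∫ t in b..b+1, t^(2*β)) ≤ y^(-e₃) * c₇ :=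
                  mul_le_mul_of_nonneg_left hi2 hye
              _ = c₇ * y^(-e₃) := mul_comm _ _
          linarith [k1, k3]
        calc (∫ t in b..b+1, Lf t * t^(2*β))
            ≤ K₁ * D * c₃ * ((∫ t in b..b+1, t^(2*β-e₃))
              + y^(-e₃) * ∫ t in b..b+1, t^(2*β)) := by rw [← hsplit]; exact hmono
          _ ≤ K₁ * D * c₃ * ((c₆ * 2^e₃ + c₇) * y^(-e₃)) :=
              mul_le_mul_of_nonneg_left hkey hKDc
      have hml := hMlow (2*β) (by linarith)
      have h6 : |v y| * (2:ℝ)^(-(2*β)-1)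
          ≤ K₁ * D * c₃ * ((c₆ * 2^e₃ + c₇) * y^(-e₃)) :=
        le_trans (mul_le_mul_of_nonneg_left hml (abs_nonneg _)) (h2.trans h3)
      have h7 : (2:ℝ)^(-(2*β)-1) * (2:ℝ)^(2*β+1) = 1 := by
        rw [← Real.rpow_add two_pos]; norm_num
      calc |v y| = (|v y| * (2:ℝ)^(-(2*β)-1)) * (2:ℝ)^(2*β+1) := by
            rw [mul_assoc, h7, mul_one]
        _ ≤ (K₁ * D * c₃ * ((c₆ * 2^e₃ + c₇) * y^(-e₃))) * (2:ℝ)^(2*β+1) :=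
            mul_le_mul_of_nonneg_right h6 (Real.rpow_nonneg two_pos.le _)
        _ = K₂ * D * y^(-e₃) := by rw [hK₂def]; ring
    intro y hy
    rw [hD2eq]
    have hy0 : 0 < y := hI hy
    have huv : u y = v y * y^β := (div_mul_cancel₀ _ (rpow_pos_of_pos hy0 β).ne').symm
    have hveq : u y^2 / y^ν = (v y)^2 * y^(2*β-ν) := by
      rw [huv, mul_pow, hrsq y β hy0, mul_div_assoc, ← Real.rpow_sub hy0]
    have hvb := hvbound y hy
    have hvsq : (v y)^2 ≤ (K₂ * D * y^(-e₃))^2 := by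
      rw [← sq_abs (v y)]
      exact pow_le_pow_left₀ (abs_nonneg _) hvb 2
    calc u y^2 / y^ν = (v y)^2 * y^(2*β-ν) := hveq
      _ ≤ (K₂ * D * y^(-e₃))^2 * y^(2*β-ν) :=
          mul_le_mul_of_nonneg_right hvsq (Real.rpow_nonneg hy0.le _)
      _ = K₂^2 * D^2 * y^(2*β-ν-2*e₃) := by
          rw [mul_pow, mul_pow, hrsq y (-e₃) hy0, mul_assoc, ← Real.rpow_add hy0,
            show 2*(-e₃) + (2*β-ν) = 2*β-ν-2*e₃ by ring]
      _ ≤ K₂^2 * D^2 * 2^(2*β-ν-2*e₃) := by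
          apply mul_le_mul_of_nonneg_left _ (by positivity)
          exact Real.rpow_le_rpow hy0.le (hle2 y hy) hfin
      _ = Cs * D2 := by rw [hCsdef, hDD]; ring
      _ ≤ (Cs + Cl) * D2 := by
          rw [add_mul]; linarith [mul_nonneg hCl0.le hD2nn]
  · -- large b : 1 ≤ b
    have hsqb : Real.sqrt (b^(-(2*γ))) = b^(-γ) := by
      rw [show -(2*γ) = 2*(-γ) by ring, ← hrsq b (-γ) hb]
      exact Real.sqrt_sq (Real.rpow_nonneg hb.le _)
    have hbound : ∀ z x : ℝ, z ∈ Set.Icc b (b+1) → x ∈ Set.Icc b (b+1) → z ≤ x →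
        Real.sqrt (∫ σ in z..x, σ^(-(2*γ))) ≤ b^(-γ) := by
      intro z x hz hx hzx
      have h1 : (∫ σ in z..x, σ^(-(2*γ))) ≤ ∫ σ in z..x, b^(-(2*γ)) := by
        apply intervalIntegral.integral_mono_on hzx (hpowint (-(2*γ)) z x hz hx)
          intervalIntegrable_const
        intro σ hσ
        exact rpow_le_rpow_of_nonpos hb (le_trans hz.1 hσ.1) (by linarith)
      have h2 : (∫ σ in z..x, b^(-(2*γ))) = (x - z) * b^(-(2*γ)) := by
        rw [intervalIntegral.integral_const, smul_eq_mul]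
      have h3 : (x - z) * b^(-(2*γ)) ≤ b^(-(2*γ)) := by
        have hxz1 : x - z ≤ 1 := by
          have := hx.2; have := hz.1; linarith
        calc (x - z) * b^(-(2*γ)) ≤ 1 * b^(-(2*γ)) :=
              mul_le_mul_of_nonneg_right hxz1 (Real.rpow_nonneg hb.le _)
          _ = b^(-(2*γ)) := one_mul _
      calc Real.sqrt (∫ σ in z..x, σ^(-(2*γ))) ≤ Real.sqrt (b^(-(2*γ))) :=
            Real.sqrt_le_sqrt (by linarith)
        _ = b^(-γ) := hsqb
    have hwb : ∀ s ∈ Set.Icc b (b+1), |w1 s| ≤ D * b^(-γ) := by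
      intro s hs
      have hKb : ∀ τ ∈ Set.Icc b (b+1), |w1 s - w1 τ| ≤ D * b^(-γ) := by
        intro τ hτ
        rcases le_total τ s with hts | hst
        · exact le_trans (hCS τ s hτ hs hts)
            (mul_le_mul_of_nonneg_left (hbound τ s hτ hs hts) hD0)
        · rw [abs_sub_comm]
          exact le_trans (hCS s τ hs hτ hst)
            (mul_le_mul_of_nonneg_left (hbound s τ hs hτ hst) hD0)
      have h2 := havg (2*α) w1 (fun _ => D * b^(-γ)) (by linarith) hw1cont
        continuousOn_const hW0 s hs hKb
      rw [intervalIntegral.integral_const_mul] at h2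
      exact le_of_mul_le_mul_right h2 (hMpos (2*α) (by linarith))
    have hb2b : b + 1 ≤ 2*b := by linarith
    have hvb : ∀ y ∈ Set.Icc b (b+1), |v y| ≤ 2^α * b^(-β) * D := by
      intro y hy
      have hcb : (0:ℝ) ≤ D * b^(-γ) * (2^α * b^α) := by
        have := Real.rpow_nonneg hb.le (-γ)
        have := Real.rpow_nonneg hb.le α
        have := Real.rpow_nonneg (le_of_lt two_pos) α
        positivity
      have hdiffb : ∀ t yy : ℝ, t ∈ Set.Icc b (b+1) → yy ∈ Set.Icc b (b+1) → t ≤ yy →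
          |∫ s in t..yy, w1 s * s^α| ≤ D * b^(-γ) * (2^α * b^α) := by
        intro t yy ht hyy htyy
        have hDb : (0:ℝ) ≤ D * b^(-γ) := mul_nonneg hD0 (Real.rpow_nonneg hb.le _)
        have hcc : ((b+1):ℝ)^α ≤ 2^α * b^α := by
          calc ((b+1):ℝ)^α ≤ (2*b)^α :=
                Real.rpow_le_rpow (by linarith) hb2b hα
            _ = 2^α * b^α := Real.mul_rpow (by norm_num) hb.le
        calc |∫ s in t..yy, w1 s * s^α| ≤ ∫ s in t..yy, |w1 s * s^α| :=
              intervalIntegral.abs_integral_le_integral_abs htyy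
          _ ≤ ∫ s in t..yy, D * b^(-γ) * (b+1)^α := by
              apply intervalIntegral.integral_mono_on htyy
              · apply ContinuousOn.intervalIntegrable
                apply ContinuousOn.mono ((hw1cont.mul (hpowcont α)).abs)
                exact Set.uIcc_subset_Icc ht hyy
              · exact intervalIntegrable_const
              · intro s hs
                have hsI : s ∈ Set.Icc b (b+1) := ⟨le_trans ht.1 hs.1, le_trans hs.2 hyy.2⟩
                have hs0 : 0 < s := hI hsI
                rw [abs_mul, abs_of_nonneg (Real.rpow_nonneg hs0.le α)]
                apply mul_le_mul (hwb s hsI)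
                  (Real.rpow_le_rpow hs0.le hsI.2 hα)
                  (Real.rpow_nonneg hs0.le _) hDb
          _ = (yy - t) * (D * b^(-γ) * (b+1)^α) := by
              rw [intervalIntegral.integral_const, smul_eq_mul]
          _ ≤ D * b^(-γ) * (2^α * b^α) := by
              have hyt1 : yy - t ≤ 1 := by
                have := hyy.2; have := ht.1; linarith
              have hb1a : (0:ℝ) ≤ D * b^(-γ) * (b+1)^α := by
                apply mul_nonneg hDb (Real.rpow_nonneg (by linarith) _)
              calc (yy - t) * (D * b^(-γ) * (b+1)^α)
                  ≤ 1 * (D * b^(-γ) * (b+1)^α) :=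
                    mul_le_mul_of_nonneg_right hyt1 hb1a
                _ = D * b^(-γ) * (b+1)^α := one_mul _
                _ ≤ D * b^(-γ) * (2^α * b^α) := mul_le_mul_of_nonneg_left hcc hDb
      have hLb : ∀ t ∈ Set.Icc b (b+1), |v y - v t| ≤ D * b^(-γ) * (2^α * b^α) := by
        intro t ht
        rcases le_total t y with hty | hyt
        · rw [hFTCv t y ht hy hty]; exact hdiffb t y ht hy hty
        · rw [show v y - v t = -(v t - v y) by ring, abs_neg, hFTCv y t hy ht hyt]
          exact hdiffb y t hy ht hyt
      have h2 := havg (2*β) v (fun _ => D * b^(-γ) * (2^α * b^α)) (by linarith) hvcont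
        continuousOn_const hV0 y hy hLb
      rw [intervalIntegral.integral_const_mul] at h2
      have h3 := le_of_mul_le_mul_right h2 (hMpos (2*β) (by linarith))
      calc |v y| ≤ D * b^(-γ) * (2^α * b^α) := h3
        _ = 2^α * (b^(-γ) * b^α) * D := by ring
        _ = 2^α * b^(-β) * D := by
            rw [← Real.rpow_add hb, show -γ + α = -β by rw [hγdef]; ring]
    intro y hy
    rw [hD2eq]
    have hy0 : 0 < y := hI hy
    have huv : u y = v y * y^β := (div_mul_cancel₀ _ (rpow_pos_of_pos hy0 β).ne').symm
    have hveq : u y^2 / y^ν = (v y)^2 * y^(2*β-ν) := by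
      rw [huv, mul_pow, hrsq y β hy0, mul_div_assoc, ← Real.rpow_sub hy0]
    have hvb2 := hvb y hy
    have hvsq : (v y)^2 ≤ (2^α * b^(-β) * D)^2 := by
      rw [← sq_abs (v y)]
      exact pow_le_pow_left₀ (abs_nonneg _) hvb2 2
    have hyb : y^(2*β-ν) ≤ (2*b)^(2*β-ν) := by
      apply Real.rpow_le_rpow hy0.le (le_trans hy.2 hb2b) (by linarith)
    have h2b : ((2*b):ℝ)^(2*β-ν) = 2^(2*β-ν) * b^(2*β-ν) := Real.mul_rpow (by norm_num) hb.le
    have hbν : b^(2*(-β)) * b^(2*β-ν) = b^(-ν) := by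
      rw [← Real.rpow_add hb, show 2*(-β) + (2*β-ν) = -ν by ring]
    have hbν1 : b^(-ν) ≤ 1 :=
      Real.rpow_le_one_of_one_le_of_nonpos hbl (by linarith)
    calc u y^2 / y^ν = (v y)^2 * y^(2*β-ν) := hveq
      _ ≤ (2^α * b^(-β) * D)^2 * y^(2*β-ν) :=
          mul_le_mul_of_nonneg_right hvsq (Real.rpow_nonneg hy0.le _)
      _ ≤ (2^α * b^(-β) * D)^2 * ((2*b)^(2*β-ν)) :=
          mul_le_mul_of_nonneg_left hyb (by positivity)
      _ = (2^α)^2 * 2^(2*β-ν) * (b^(2*(-β)) * b^(2*β-ν)) * D^2 := by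
          rw [h2b, mul_pow, mul_pow, hrsq b (-β) hb]; ring
      _ = (2^α)^2 * 2^(2*β-ν) * b^(-ν) * D^2 := by rw [hbν]
      _ ≤ (2^α)^2 * 2^(2*β-ν) * 1 * D^2 := by
          apply mul_le_mul_of_nonneg_right _ (sq_nonneg D)
          apply mul_le_mul_of_nonneg_left hbν1
          positivity
      _ = Cl * D2 := by
          rw [hCldef, hDD, hrsq 2 α two_pos, mul_one]
      _ ≤ (Cs + Cl) * D2 := by
          rw [add_mul]; linarith [mul_nonneg hCs0.le hD2nn]
end

section
/- Let β ≥ 0 and b > 0, and let u ∈ H²(b, b+1) with ∫_b^{b+1} u(x)x^β dx = 0. Then for every y ∈ [b, b+1], u(y)/y^β · ((b+1)^{2β+1} − b^{2β+1}) = ∫_b^y (u(t)/t^β)' (t^{2β+1} − b^{2β+1}) dt − ∫_y^{b+1} (u(t)/t^β)' ((b+1)^{2β+1} − t^{2β+1}) dt. -/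
open Real MeasureTheory Set intervalIntegral

/-- Representation formula for `u/x^β` under the moment condition
`∫_b^{b+1} u x^β dx = 0`. -/
theorem representation_formula
    (β b : ℝ) (hβ : 0 ≤ β) (hb : 0 < b)
    (u : ℝ → ℝ) (hu : ContDiffOn ℝ 2 u (Set.Icc b (b + 1)))
    (hcond : ∫ x in b..(b + 1), u x * x ^ β = 0) :
    ∀ y ∈ Set.Icc b (b + 1),
      u y / y ^ β * ((b + 1) ^ (2 * β + 1) - b ^ (2 * β + 1))
        = (∫ t in b..y,
            deriv (fun s : ℝ => u s / s ^ β) t * (t ^ (2 * β + 1) - b ^ (2 * β + 1)))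
          - ∫ t in y..(b + 1),
              deriv (fun s : ℝ => u s / s ^ β) t
                * ((b + 1) ^ (2 * β + 1) - t ^ (2 * β + 1)) := by
  intro y hy
  obtain ⟨hby, hyb⟩ := hy
  set A : ℝ := 2 * β + 1 with hA
  have hb1 : b < b + 1 := by linarith
  have hpos : ∀ t ∈ Set.Icc b (b + 1), (0 : ℝ) < t := fun t ht => lt_of_lt_of_le hb ht.1
  set v : ℝ → ℝ := fun s : ℝ => u s / s ^ β with hvdef
  set w : ℝ → ℝ := derivWithin u (Set.Icc b (b + 1)) with hwdef
  set V : ℝ → ℝ :=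
    fun t => (w t * t ^ β - u t * (β * t ^ (β - 1))) / (t ^ β) ^ 2 with hVdef
  have hucont : ContinuousOn u (Set.Icc b (b + 1)) := hu.continuousOn
  have hwcont : ContinuousOn w (Set.Icc b (b + 1)) :=
    hu.continuousOn_derivWithin (uniqueDiffOn_Icc hb1) (by norm_num)
  have hrpow : ∀ p : ℝ, ContinuousOn (fun t : ℝ => t ^ p) (Set.Icc b (b + 1)) := fun p =>
    ContinuousOn.rpow_const continuousOn_id fun t ht => Or.inl (hpos t ht).ne'
  have hpownz : ∀ t ∈ Set.Icc b (b + 1), (t : ℝ) ^ β ≠ 0 := fun t ht =>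
    (Real.rpow_pos_of_pos (hpos t ht) β).ne'
  have hvcont : ContinuousOn v (Set.Icc b (b + 1)) := hucont.div (hrpow β) hpownz
  have hVcont : ContinuousOn V (Set.Icc b (b + 1)) := by
    apply ContinuousOn.div
    · exact (hwcont.mul (hrpow β)).sub (hucont.mul (continuousOn_const.mul (hrpow (β - 1))))
    · exact (hrpow β).pow 2
    · exact fun t ht => pow_ne_zero 2 (hpownz t ht)
  -- derivative of v on the open interval
  have hvderiv : ∀ t ∈ Set.Ioo b (b + 1), HasDerivAt v (V t) t := by
    intro t ht
    have htpos : 0 < t := lt_trans hb ht.1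
    have hnhds : Set.Icc b (b + 1) ∈ nhds t := Icc_mem_nhds ht.1 ht.2
    have hu' : HasDerivAt u (w t) t :=
      ((hu.differentiableOn (by norm_num)) t
        (Set.mem_Icc.mpr ⟨ht.1.le, ht.2.le⟩)).hasDerivWithinAt.hasDerivAt hnhds
    have hp : HasDerivAt (fun s : ℝ => s ^ β) (β * t ^ (β - 1)) t :=
      Real.hasDerivAt_rpow_const (Or.inl htpos.ne')
    exact hu'.div hp ((Real.rpow_pos_of_pos htpos β).ne')
  have hvderiveq : ∀ t ∈ Set.Ioo b (b + 1), deriv v t = V t := fun t ht =>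
    (hvderiv t ht).deriv
  -- derivative of the two products
  have hkey : ∀ t ∈ Set.Ioo b (b + 1), v t * (A * t ^ (A - 1)) = A * (u t * t ^ β) := by
    intro t ht
    have htpos : 0 < t := lt_trans hb ht.1
    have h1 : t ^ (A - 1) = t ^ β * t ^ β := by
      rw [show A - 1 = β + β by rw [hA]; ring, Real.rpow_add htpos]
    have hnz : t ^ β ≠ 0 := (Real.rpow_pos_of_pos htpos β).ne'
    rw [hvdef]
    simp only [h1]
    field_simp
  have hgderiv : ∀ t ∈ Set.Ioo b (b + 1),
      HasDerivAt (fun s : ℝ => v s * (s ^ A - b ^ A))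
        (V t * (t ^ A - b ^ A) + A * (u t * t ^ β)) t := by
    intro t ht
    have htpos : 0 < t := lt_trans hb ht.1
    have hp : HasDerivAt (fun s : ℝ => s ^ A - b ^ A) (A * t ^ (A - 1)) t :=
      (Real.hasDerivAt_rpow_const (Or.inl htpos.ne')).sub_const _
    have h := (hvderiv t ht).mul hp
    rw [hkey t ht] at h
    exact h
  have hhderiv : ∀ t ∈ Set.Ioo b (b + 1),
      HasDerivAt (fun s : ℝ => v s * ((b + 1) ^ A - s ^ A))
        (V t * ((b + 1) ^ A - t ^ A) - A * (u t * t ^ β)) t := by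
    intro t ht
    have htpos : 0 < t := lt_trans hb ht.1
    have hp : HasDerivAt (fun s : ℝ => (b + 1) ^ A - s ^ A) (-(A * t ^ (A - 1))) t :=
      (Real.hasDerivAt_rpow_const (Or.inl htpos.ne')).const_sub _
    have h := (hvderiv t ht).mul hp
    have : V t * ((b + 1) ^ A - t ^ A) + v t * -(A * t ^ (A - 1))
        = V t * ((b + 1) ^ A - t ^ A) - A * (u t * t ^ β) := by
      rw [mul_neg, hkey t ht]; ring
    rwa [this] at h
  -- set inclusions
  have hsub1 : Set.Icc b y ⊆ Set.Icc b (b + 1) := Set.Icc_subset_Icc_right hyb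
  have hsub2 : Set.Icc y (b + 1) ⊆ Set.Icc b (b + 1) := Set.Icc_subset_Icc_left hby
  -- integrability facts
  have int1 : IntervalIntegrable (fun t => V t * (t ^ A - b ^ A)) volume b y := by
    apply ContinuousOn.intervalIntegrable
    rw [Set.uIcc_of_le hby]
    exact ((hVcont.mul ((hrpow A).sub continuousOn_const)).mono hsub1)
  have int2 : IntervalIntegrable (fun t => A * (u t * t ^ β)) volume b y := by
    apply ContinuousOn.intervalIntegrable
    rw [Set.uIcc_of_le hby]
    exact (continuousOn_const.mul (hucont.mul (hrpow β))).mono hsub1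
  have int3 : IntervalIntegrable (fun t => V t * ((b + 1) ^ A - t ^ A)) volume y (b + 1) := by
    apply ContinuousOn.intervalIntegrable
    rw [Set.uIcc_of_le hyb]
    exact ((hVcont.mul (continuousOn_const.sub (hrpow A))).mono hsub2)
  have int4 : IntervalIntegrable (fun t => A * (u t * t ^ β)) volume y (b + 1) := by
    apply ContinuousOn.intervalIntegrable
    rw [Set.uIcc_of_le hyb]
    exact (continuousOn_const.mul (hucont.mul (hrpow β))).mono hsub2
  have intu1 : IntervalIntegrable (fun t => u t * t ^ β) volume b y := by
    apply ContinuousOn.intervalIntegrable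
    rw [Set.uIcc_of_le hby]
    exact (hucont.mul (hrpow β)).mono hsub1
  have intu2 : IntervalIntegrable (fun t => u t * t ^ β) volume y (b + 1) := by
    apply ContinuousOn.intervalIntegrable
    rw [Set.uIcc_of_le hyb]
    exact (hucont.mul (hrpow β)).mono hsub2
  -- FTC on [b, y]
  have ftc1 : ∫ t in b..y, (V t * (t ^ A - b ^ A) + A * (u t * t ^ β))
      = v y * (y ^ A - b ^ A) - v b * (b ^ A - b ^ A) := by
    apply intervalIntegral.integral_eq_sub_of_hasDeriv_right_of_le
      (f := fun s : ℝ => v s * (s ^ A - b ^ A)) hby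
    · exact (hvcont.mono hsub1).mul (((hrpow A).sub continuousOn_const).mono hsub1)
    · intro t ht
      exact (hgderiv t ⟨ht.1, lt_of_lt_of_le ht.2 hyb⟩).hasDerivWithinAt
    · exact int1.add int2
  -- FTC on [y, b+1]
  have ftc2 : ∫ t in y..(b + 1), (V t * ((b + 1) ^ A - t ^ A) - A * (u t * t ^ β))
      = v (b + 1) * ((b + 1) ^ A - (b + 1) ^ A) - v y * ((b + 1) ^ A - y ^ A) := by
    apply intervalIntegral.integral_eq_sub_of_hasDeriv_right_of_le
      (f := fun s : ℝ => v s * ((b + 1) ^ A - s ^ A)) hyb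
    · exact (hvcont.mono hsub2).mul ((continuousOn_const.sub (hrpow A)).mono hsub2)
    · intro t ht
      exact (hhderiv t ⟨lt_of_le_of_lt hby ht.1, ht.2⟩).hasDerivWithinAt
    · exact int3.sub int4
  -- split the integrals
  have S1 : ∫ t in b..y, (V t * (t ^ A - b ^ A) + A * (u t * t ^ β))
      = (∫ t in b..y, V t * (t ^ A - b ^ A)) + A * ∫ t in b..y, u t * t ^ β := by
    rw [intervalIntegral.integral_add int1 int2, intervalIntegral.integral_const_mul]
  have S2 : ∫ t in y..(b + 1), (V t * ((b + 1) ^ A - t ^ A) - A * (u t * t ^ β))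
      = (∫ t in y..(b + 1), V t * ((b + 1) ^ A - t ^ A))
        - A * ∫ t in y..(b + 1), u t * t ^ β := by
    rw [intervalIntegral.integral_sub int3 int4, intervalIntegral.integral_const_mul]
  -- moment condition split
  have Hm : (∫ t in b..y, u t * t ^ β) + ∫ t in y..(b + 1), u t * t ^ β = 0 := by
    rw [intervalIntegral.integral_add_adjacent_intervals intu1 intu2]
    exact hcond
  -- replace `deriv v` by `V` in the goal's integrals
  have h0 : ∀ᵐ t : ℝ, t ≠ b + 1 := by
    rw [MeasureTheory.ae_iff]
    simp [Real.volume_singleton]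
  have hcongr1 : (∫ t in b..y, deriv v t * (t ^ A - b ^ A))
      = ∫ t in b..y, V t * (t ^ A - b ^ A) := by
    apply intervalIntegral.integral_congr_ae
    filter_upwards [h0] with t hne ht
    rw [Set.uIoc_of_le hby] at ht
    have : t ∈ Set.Ioo b (b + 1) :=
      ⟨ht.1, lt_of_le_of_ne (ht.2.trans hyb) hne⟩
    rw [hvderiveq t this]
  have hcongr2 : (∫ t in y..(b + 1), deriv v t * ((b + 1) ^ A - t ^ A))
      = ∫ t in y..(b + 1), V t * ((b + 1) ^ A - t ^ A) := by
    apply intervalIntegral.integral_congr_ae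
    filter_upwards [h0] with t hne ht
    rw [Set.uIoc_of_le hyb] at ht
    have : t ∈ Set.Ioo b (b + 1) :=
      ⟨lt_of_le_of_lt hby ht.1, lt_of_le_of_ne ht.2 hne⟩
    rw [hvderiveq t this]
  rw [hcongr1, hcongr2]
  have hgoal : u y / y ^ β = v y := rfl
  rw [hgoal]
  clear_value v w V A
  linear_combination S1 - ftc1 + ftc2 - S2 + A * Hm
end

section
/- Let α ≥ 0, 0 ≤ β < 3/2 + α, 0 ≤ ν < 3 with ν ≤ 2β, and let C be the constant from the Sobolev-type lemma (sup_{[b,b+1]}|u|²/y^ν ≤ C·h_b[u] for u satisfying the two constraints). If b > 0 and V ≥ 0 is bounded with ∫_b^{b+1} V(x)x^ν dx ≤ 1/C, then every linear subspace F ⊆ H²(b, b+1) on which h_b[f] − ∫_b^{b+1} V|f|² dx < 0 for all nonzero f ∈ F has dimension at most 2. -/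
open Real MeasureTheory Set intervalIntegral

section aux

variable {b : ℝ}

lemma aux_rpow_contOn (hb : 0 < b) (p : ℝ) :
    ContinuousOn (fun x : ℝ => x ^ p) (Icc b (b + 1)) := fun x hx =>
  (Real.continuousAt_rpow_const x p
    (Or.inl (ne_of_gt (lt_of_lt_of_le hb hx.1)))).continuousWithinAt

lemma aux_g_contDiffOn (hb : 0 < b) (β : ℝ) (f : ℝ → ℝ)
    (hf : ContDiffOn ℝ 2 f (Icc b (b + 1))) :
    ContDiffOn ℝ 2 (fun t : ℝ => f t / t ^ β) (Icc b (b + 1)) :=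
  hf.div
    (fun x hx => (Real.contDiffAt_rpow_const_of_ne
      (ne_of_gt (lt_of_lt_of_le hb hx.1))).contDiffWithinAt)
    (fun x hx => (Real.rpow_pos_of_pos (lt_of_lt_of_le hb hx.1) β).ne')

lemma aux_g_diffAt (hb : 0 < b) (β : ℝ) (f : ℝ → ℝ)
    (hf : ContDiffOn ℝ 2 f (Icc b (b + 1))) {x : ℝ} (hx : x ∈ Ioo b (b + 1)) :
    DifferentiableAt ℝ (fun t : ℝ => f t / t ^ β) x := by
  have hnhds : Icc b (b + 1) ∈ nhds x := Icc_mem_nhds hx.1 hx.2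
  exact ((aux_g_contDiffOn hb β f hf).contDiffAt hnhds).differentiableAt (by norm_num)

lemma aux_ae_ne (c : ℝ) : ∀ᵐ x : ℝ ∂(volume : Measure ℝ), x ≠ c := by
  rw [ae_iff]
  simp only [not_not, Set.setOf_eq_eq_singleton]
  exact measure_singleton _

lemma aux_integrable (hb : 0 < b) (β α : ℝ) (f : ℝ → ℝ)
    (hf : ContDiffOn ℝ 2 f (Icc b (b + 1))) :
    IntervalIntegrable (fun x => deriv (fun t : ℝ => f t / t ^ β) x * x ^ α)
      volume b (b + 1) := by
  have hle : b ≤ b + 1 := by linarith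
  have hg := aux_g_contDiffOn hb β f hf
  have hcont : ContinuousOn
      (fun x => derivWithin (fun t : ℝ => f t / t ^ β) (Icc b (b + 1)) x * x ^ α)
      (Icc b (b + 1)) :=
    (hg.continuousOn_derivWithin (uniqueDiffOn_Icc (by linarith)) (by norm_num)).mul
      (aux_rpow_contOn hb α)
  have h1 : IntervalIntegrable
      (fun x => derivWithin (fun t : ℝ => f t / t ^ β) (Icc b (b + 1)) x * x ^ α)
      volume b (b + 1) := by
    apply ContinuousOn.intervalIntegrable
    rwa [Set.uIcc_of_le hle]
  rw [intervalIntegrable_iff_integrableOn_Ioc_of_le hle] at h1 ⊢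
  apply h1.congr
  filter_upwards [ae_restrict_mem measurableSet_Ioc,
    ae_restrict_of_ae (aux_ae_ne (b + 1))] with x hxI hxne
  have hxo : x ∈ Ioo b (b + 1) := ⟨hxI.1, lt_of_le_of_ne hxI.2 hxne⟩
  rw [derivWithin_of_mem_nhds (Icc_mem_nhds hxo.1 hxo.2)]

lemma aux_fx_integrable (hb : 0 < b) (β : ℝ) (f : ℝ → ℝ)
    (hf : ContDiffOn ℝ 2 f (Icc b (b + 1))) :
    IntervalIntegrable (fun x => f x * x ^ β) volume b (b + 1) := by
  apply ContinuousOn.intervalIntegrable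
  rw [Set.uIcc_of_le (by linarith : b ≤ b + 1)]
  exact hf.continuousOn.mul (aux_rpow_contOn hb β)

end aux

/-- If `∫_b^{b+1} V x^ν dx ≤ 1/C`, where `C` is the constant of the Sobolev-type lemma,
then any subspace of `H²(b,b+1)` on which the form `h_b − ∫ V|·|²` is negative definite
has dimension at most 2. -/
theorem negative_subspace_dim_le_two
    (α β ν : ℝ) (hα : 0 ≤ α) (hβ0 : 0 ≤ β) (hβ : β < 3 / 2 + α)
    (hν0 : 0 ≤ ν) (hν3 : ν < 3) (hνβ : ν ≤ 2 * β)
    (C : ℝ) (hC : 0 < C)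
    (hsob : ∀ b > (0 : ℝ), ∀ u : ℝ → ℝ,
      ContDiffOn ℝ 2 u (Set.Icc b (b + 1)) →
      (∫ x in b..(b + 1), u x * x ^ β) = 0 →
      (∫ x in b..(b + 1), deriv (fun t : ℝ => u t / t ^ β) x * x ^ α) = 0 →
      ∀ y ∈ Set.Icc b (b + 1),
        (u y) ^ 2 / y ^ ν
          ≤ C * ∫ x in b..(b + 1),
              (deriv (fun s : ℝ =>
                deriv (fun r : ℝ => u r / r ^ β) s / s ^ α) x) ^ 2
                * x ^ (2 * (α + β)))
    (b : ℝ) (hb : 0 < b)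
    (V : ℝ → ℝ) (hVmeas : Measurable V) (hVpos : ∀ x, 0 ≤ V x)
    (hVbdd : ∃ M : ℝ, ∀ x, V x ≤ M)
    (hVint : (∫ x in b..(b + 1), V x * x ^ ν) ≤ 1 / C)
    (F : Submodule ℝ (ℝ → ℝ))
    (hF : ∀ f ∈ F, ContDiffOn ℝ 2 f (Set.Icc b (b + 1)))
    (hneg : ∀ f ∈ F, f ≠ 0 →
      (∫ x in b..(b + 1),
        (deriv (fun s : ℝ =>
          deriv (fun r : ℝ => f r / r ^ β) s / s ^ α) x) ^ 2
          * x ^ (2 * (α + β)))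
        - (∫ x in b..(b + 1), V x * (f x) ^ 2) < 0) :
    Module.rank ℝ F ≤ 2 := by
  have hle : b ≤ b + 1 := by linarith
  -- the two constraint functionals, as a linear map to ℝ × ℝ
  have hcongr : ∀ (f g : ℝ → ℝ), f ∈ F → g ∈ F →
      (∫ x in b..(b + 1), deriv (fun t : ℝ => (f t + g t) / t ^ β) x * x ^ α)
        = (∫ x in b..(b + 1), deriv (fun t : ℝ => f t / t ^ β) x * x ^ α)
          + (∫ x in b..(b + 1), deriv (fun t : ℝ => g t / t ^ β) x * x ^ α) := by
    intro f g hfF hgF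
    rw [← intervalIntegral.integral_add (aux_integrable hb β α f (hF f hfF))
      (aux_integrable hb β α g (hF g hgF))]
    apply intervalIntegral.integral_congr_ae
    filter_upwards [aux_ae_ne (b + 1)] with x hxne hxI
    rw [Set.uIoc_of_le hle] at hxI
    have hxo : x ∈ Ioo b (b + 1) := ⟨hxI.1, lt_of_le_of_ne hxI.2 hxne⟩
    have hdf := aux_g_diffAt hb β f (hF f hfF) hxo
    have hdg := aux_g_diffAt hb β g (hF g hgF) hxo
    have : (fun t : ℝ => (f t + g t) / t ^ β)
        = fun t : ℝ => f t / t ^ β + g t / t ^ β := by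
      funext t; rw [add_div]
    rw [this, deriv_fun_add hdf hdg, add_mul]
  have hsmul : ∀ (c : ℝ) (f : ℝ → ℝ), f ∈ F →
      (∫ x in b..(b + 1), deriv (fun t : ℝ => (c * f t) / t ^ β) x * x ^ α)
        = c * (∫ x in b..(b + 1), deriv (fun t : ℝ => f t / t ^ β) x * x ^ α) := by
    intro c f hfF
    rw [← intervalIntegral.integral_const_mul]
    apply intervalIntegral.integral_congr_ae
    filter_upwards [aux_ae_ne (b + 1)] with x hxne hxI
    rw [Set.uIoc_of_le hle] at hxI
    have hxo : x ∈ Ioo b (b + 1) := ⟨hxI.1, lt_of_le_of_ne hxI.2 hxne⟩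
    have hdf := aux_g_diffAt hb β f (hF f hfF) hxo
    have : (fun t : ℝ => (c * f t) / t ^ β)
        = fun t : ℝ => c * (f t / t ^ β) := by
      funext t; rw [mul_div_assoc]
    rw [this, deriv_const_mul c hdf, mul_assoc]
  let L : F →ₗ[ℝ] ℝ × ℝ :=
    { toFun := fun f =>
        (∫ x in b..(b + 1), (f : ℝ → ℝ) x * x ^ β,
         ∫ x in b..(b + 1), deriv (fun t : ℝ => (f : ℝ → ℝ) t / t ^ β) x * x ^ α)
      map_add' := by
        intro f g
        refine Prod.ext ?_ ?_
        · simp only [Submodule.coe_add, Pi.add_apply, add_mul]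
          exact intervalIntegral.integral_add (aux_fx_integrable hb β f (hF f f.2))
            (aux_fx_integrable hb β g (hF g g.2))
        · simp only [Submodule.coe_add, Pi.add_apply]
          exact hcongr f g f.2 g.2
      map_smul' := by
        intro c f
        refine Prod.ext ?_ ?_
        · simp only [Submodule.coe_smul, Pi.smul_apply, smul_eq_mul, RingHom.id_apply,
            Prod.smul_fst, mul_assoc]
          exact intervalIntegral.integral_const_mul c _
        · simp only [Submodule.coe_smul, Pi.smul_apply, smul_eq_mul, RingHom.id_apply,
            Prod.smul_snd]
          exact hsmul c f f.2 }
  by_cases hker : LinearMap.ker L = ⊥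
  · have hinj := LinearMap.ker_eq_bot.mp hker
    calc Module.rank ℝ F ≤ Module.rank ℝ (ℝ × ℝ) := L.rank_le_of_injective hinj
    _ = 2 := by
      rw [rank_prod, Module.rank_self, Cardinal.lift_id]
      exact one_add_one_eq_two
  · obtain ⟨u, hu_ker, hu0⟩ := (Submodule.ne_bot_iff _).mp hker
    exfalso
    have hLu : L u = 0 := hu_ker
    have h1 : (∫ x in b..(b + 1), (u : ℝ → ℝ) x * x ^ β) = 0 :=
      congrArg Prod.fst hLu
    have h2 : (∫ x in b..(b + 1),
        deriv (fun t : ℝ => (u : ℝ → ℝ) t / t ^ β) x * x ^ α) = 0 :=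
      congrArg Prod.snd hLu
    set uf : ℝ → ℝ := (u : ℝ → ℝ) with huf
    have hufF : uf ∈ F := u.2
    have hcd := hF uf hufF
    have hne : uf ≠ 0 := fun h => hu0 (Subtype.ext h)
    set H := ∫ x in b..(b + 1),
      (deriv (fun s : ℝ =>
        deriv (fun r : ℝ => uf r / r ^ β) s / s ^ α) x) ^ 2
        * x ^ (2 * (α + β)) with hH
    have hH0 : 0 ≤ H := by
      apply intervalIntegral.integral_nonneg hle
      intro x hx
      exact mul_nonneg (sq_nonneg _)
        (Real.rpow_nonneg (le_trans hb.le hx.1) _)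
    have hs := hsob b hb uf hcd h1 h2
    have hpt : ∀ x ∈ Icc b (b + 1), uf x ^ 2 ≤ C * H * x ^ ν := by
      intro x hx
      have hxpos : 0 < x := lt_of_lt_of_le hb hx.1
      have hνpos : 0 < x ^ ν := Real.rpow_pos_of_pos hxpos ν
      have h := hs x hx
      calc uf x ^ 2 = uf x ^ 2 / x ^ ν * x ^ ν := by field_simp
      _ ≤ (C * H) * x ^ ν := mul_le_mul_of_nonneg_right h hνpos.le
    obtain ⟨M, hM⟩ := hVbdd
    have hCH0 : 0 ≤ C * H := mul_nonneg hC.le hH0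
    have hbd1 : 0 ≤ (b + 1 : ℝ) := by linarith
    -- integrability of V x * x^ν
    have hVν_int : IntervalIntegrable (fun x => V x * x ^ ν) volume b (b + 1) := by
      rw [intervalIntegrable_iff_integrableOn_Ioc_of_le hle]
      apply Integrable.mono' (g := fun _ => M * (b + 1) ^ ν)
        (integrableOn_const measure_Ioc_lt_top.ne)
      · exact (hVmeas.aestronglyMeasurable.restrict).mul
          (((aux_rpow_contOn hb ν).mono Ioc_subset_Icc_self).aestronglyMeasurable
            measurableSet_Ioc)
      · filter_upwards [ae_restrict_mem measurableSet_Ioc] with x hx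
        have hx0 : (0 : ℝ) ≤ x := le_trans hb.le hx.1.le
        rw [Real.norm_eq_abs, abs_of_nonneg (mul_nonneg (hVpos x) (Real.rpow_nonneg hx0 ν))]
        exact mul_le_mul (hM x) (Real.rpow_le_rpow hx0 hx.2 hν0)
          (Real.rpow_nonneg hx0 ν) (le_trans (hVpos x) (hM x))
    -- integrability of V x * uf x ^ 2
    have hVu_int : IntervalIntegrable (fun x => V x * uf x ^ 2) volume b (b + 1) := by
      rw [intervalIntegrable_iff_integrableOn_Ioc_of_le hle]
      apply Integrable.mono' (g := fun _ => M * (C * H * (b + 1) ^ ν))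
        (integrableOn_const measure_Ioc_lt_top.ne)
      · exact (hVmeas.aestronglyMeasurable.restrict).mul
          (((hcd.continuousOn.mono Ioc_subset_Icc_self).pow 2).aestronglyMeasurable
            measurableSet_Ioc)
      · filter_upwards [ae_restrict_mem measurableSet_Ioc] with x hx
        have hx0 : (0 : ℝ) ≤ x := le_trans hb.le hx.1.le
        have hxI : x ∈ Icc b (b + 1) := ⟨hx.1.le, hx.2⟩
        rw [Real.norm_eq_abs, abs_of_nonneg (mul_nonneg (hVpos x) (sq_nonneg _))]
        have h2 : uf x ^ 2 ≤ C * H * (b + 1) ^ ν :=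
          le_trans (hpt x hxI)
            (mul_le_mul_of_nonneg_left (Real.rpow_le_rpow hx0 hx.2 hν0) hCH0)
        exact mul_le_mul (hM x) h2 (sq_nonneg _) (le_trans (hVpos x) (hM x))
    have hmono : (∫ x in b..(b + 1), V x * uf x ^ 2)
        ≤ ∫ x in b..(b + 1), C * H * (V x * x ^ ν) := by
      apply intervalIntegral.integral_mono_on hle hVu_int (hVν_int.const_mul _)
      intro x hx
      calc V x * uf x ^ 2 ≤ V x * (C * H * x ^ ν) :=
            mul_le_mul_of_nonneg_left (hpt x hx) (hVpos x)
      _ = C * H * (V x * x ^ ν) := by ring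
    have hfinal : (∫ x in b..(b + 1), V x * uf x ^ 2) ≤ H := by
      calc (∫ x in b..(b + 1), V x * uf x ^ 2)
          ≤ ∫ x in b..(b + 1), C * H * (V x * x ^ ν) := hmono
      _ = C * H * ∫ x in b..(b + 1), V x * x ^ ν := intervalIntegral.integral_const_mul _ _
      _ ≤ C * H * (1 / C) := mul_le_mul_of_nonneg_left hVint hCH0
      _ = H := by field_simp
    have := hneg uf hufF hne
    rw [← hH] at this
    linarith
end

section
/- Let α ≥ 0, β ≥ 0, b > 0, and let V ≥ 0 be bounded with V ≢ 0 on (b, b+1). Then the two-dimensional subspace F = span{x^β, x^{α+β+1}} ⊆ H²(b, b+1) satisfies h_b[f] − ∫_b^{b+1} V|f|² dx < 0 for every nonzero f ∈ F, where h_b[u] = ∫_b^{b+1}|(x^{−α}(u/x^β)')'|² x^{2(α+β)} dx. -/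
open Real MeasureTheory Set intervalIntegral

/-- On the span of `f₁(x) = x^β` and `f₂(x) = x^{α+β+1}` the form `h_b − ∫ V|·|²` is
strictly negative, provided `V ≥ 0` is bounded and not a.e. zero on `(b,b+1)`. -/
theorem form_negative_on_span
    (α β b : ℝ) (hα : 0 ≤ α) (hβ : 0 ≤ β) (hb : 0 < b)
    (V : ℝ → ℝ) (hVmeas : Measurable V) (hVpos : ∀ x, 0 ≤ V x)
    (hVbdd : ∃ M : ℝ, ∀ x, V x ≤ M)
    (hVne : ¬ (∀ᵐ x ∂(MeasureTheory.volume.restrict (Set.Ioo b (b + 1))), V x = 0)) :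
    ∀ c₁ c₂ : ℝ, (c₁ ≠ 0 ∨ c₂ ≠ 0) →
      (∫ x in b..(b + 1),
        (deriv (fun s : ℝ =>
          deriv (fun r : ℝ =>
            (c₁ * r ^ β + c₂ * r ^ (α + β + 1)) / r ^ β) s / s ^ α) x) ^ 2
          * x ^ (2 * (α + β)))
        - (∫ x in b..(b + 1), V x * (c₁ * x ^ β + c₂ * x ^ (α + β + 1)) ^ 2) < 0 := by
  intro c₁ c₂ hc
  set f : ℝ → ℝ := fun x => c₁ * x ^ β + c₂ * x ^ (α + β + 1) with hf
  -- The kinetic term vanishes identically on the span.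
  have h1 : (∫ x in b..(b + 1),
      (deriv (fun s : ℝ =>
        deriv (fun r : ℝ =>
          (c₁ * r ^ β + c₂ * r ^ (α + β + 1)) / r ^ β) s / s ^ α) x) ^ 2
        * x ^ (2 * (α + β))) = 0 := by
    rw [intervalIntegral.integral_congr (g := fun _ => (0:ℝ))]
    · simp
    · intro x hx
      have hxb : b ≤ x := by
        rcases Set.mem_uIcc.mp hx with h | h
        · exact h.1
        · linarith [h.1]
      have hx0 : (0:ℝ) < x := lt_of_lt_of_le hb hxb
      have key : ∀ s ∈ Set.Ioi (0:ℝ),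
          deriv (fun r : ℝ => (c₁ * r ^ β + c₂ * r ^ (α + β + 1)) / r ^ β) s / s ^ α
            = c₂ * (α + 1) := by
        intro s hs
        have hs0 : (0:ℝ) < s := hs
        have heq : (fun r : ℝ => (c₁ * r ^ β + c₂ * r ^ (α + β + 1)) / r ^ β)
            =ᶠ[nhds s] (fun r : ℝ => c₁ + c₂ * r ^ (α + 1)) := by
          filter_upwards [IsOpen.mem_nhds isOpen_Ioi hs] with r hr
          have hr0 : (0:ℝ) < r := hr
          have hrβ : r ^ β ≠ 0 := ne_of_gt (Real.rpow_pos_of_pos hr0 β)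
          have hsplit : r ^ (α + β + 1) = r ^ (α + 1) * r ^ β := by
            rw [← Real.rpow_add hr0]; ring_nf
          rw [hsplit]; field_simp
        have hd : HasDerivAt (fun r : ℝ => c₁ + c₂ * r ^ (α + 1))
            (c₂ * ((α + 1) * s ^ α)) s := by
          have h0 : HasDerivAt (fun r : ℝ => r ^ (α + 1)) ((α + 1) * s ^ (α + 1 - 1)) s :=
            Real.hasDerivAt_rpow_const (Or.inl (ne_of_gt hs0))
          have h1 := (h0.const_mul c₂).const_add c₁
          simpa [add_sub_cancel_right] using h1
        have hds : deriv (fun r : ℝ => (c₁ * r ^ β + c₂ * r ^ (α + β + 1)) / r ^ β) s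
            = c₂ * ((α + 1) * s ^ α) := by
          rw [Filter.EventuallyEq.deriv_eq heq, hd.deriv]
        rw [hds]
        have hsα : s ^ α ≠ 0 := ne_of_gt (Real.rpow_pos_of_pos hs0 α)
        field_simp
      have heq2 : (fun s : ℝ =>
          deriv (fun r : ℝ => (c₁ * r ^ β + c₂ * r ^ (α + β + 1)) / r ^ β) s / s ^ α)
          =ᶠ[nhds x] (fun _ => c₂ * (α + 1)) := by
        filter_upwards [IsOpen.mem_nhds isOpen_Ioi hx0] with s hs
        exact key s hs
      simp only [Filter.EventuallyEq.deriv_eq heq2, deriv_const]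
      simp
  rw [h1, zero_sub, neg_lt, neg_zero]
  -- Now show the potential term is strictly positive.
  have hbb : b ≤ b + 1 := by linarith
  rw [intervalIntegral.integral_of_le hbb]
  set μ := MeasureTheory.volume.restrict (Set.Ioc b (b + 1)) with hμ
  have hfmeas : Measurable f := by
    apply Measurable.add
    · exact ((Real.continuous_rpow_const hβ).measurable).const_mul c₁
    · exact ((Real.continuous_rpow_const (by linarith)).measurable).const_mul c₂
  obtain ⟨M, hM⟩ := hVbdd
  have hM0 : 0 ≤ M := le_trans (hVpos 0) (hM 0)
  set C : ℝ := (|c₁| * (b + 1) ^ β + |c₂| * (b + 1) ^ (α + β + 1)) ^ 2 with hC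
  have hCnn : 0 ≤ C := sq_nonneg _
  have hfb : ∀ x ∈ Set.Ioc b (b + 1), f x ^ 2 ≤ C := by
    intro x hx
    have hx0 : (0:ℝ) ≤ x := le_of_lt (lt_trans hb hx.1)
    have hxle : x ≤ b + 1 := hx.2
    have habs : |f x| ≤ |c₁| * (b + 1) ^ β + |c₂| * (b + 1) ^ (α + β + 1) := by
      refine le_trans (abs_add_le _ _) ?_
      gcongr
      · rw [abs_mul]
        gcongr
        · rw [abs_of_nonneg (Real.rpow_nonneg hx0 β)]
          exact Real.rpow_le_rpow hx0 hxle hβ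
      · rw [abs_mul]
        gcongr
        · rw [abs_of_nonneg (Real.rpow_nonneg hx0 _)]
          exact Real.rpow_le_rpow hx0 hxle (by linarith)
    calc f x ^ 2 = |f x| ^ 2 := (sq_abs _).symm
      _ ≤ C := by rw [hC]; exact pow_le_pow_left₀ (abs_nonneg _) habs 2
  have hint : MeasureTheory.Integrable (fun x => V x * f x ^ 2) μ := by
    have hmeas : Measurable fun x => V x * f x ^ 2 := hVmeas.mul (hfmeas.pow_const 2)
    refine MeasureTheory.Integrable.mono'
      (MeasureTheory.integrable_const (M * C)) hmeas.aestronglyMeasurable ?_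
    filter_upwards [MeasureTheory.ae_restrict_mem measurableSet_Ioc] with x hx
    rw [Real.norm_eq_abs, abs_of_nonneg (mul_nonneg (hVpos x) (sq_nonneg _))]
    exact mul_le_mul (hM x) (hfb x hx) (sq_nonneg _) hM0
  have hnn : ∀ x, 0 ≤ V x * f x ^ 2 := fun x => mul_nonneg (hVpos x) (sq_nonneg _)
  have hnonneg : 0 ≤ ∫ x, V x * f x ^ 2 ∂μ :=
    MeasureTheory.integral_nonneg hnn
  rcases hnonneg.lt_or_eq with h | h
  · exact h
  exfalso
  have hzero : (fun x => V x * f x ^ 2) =ᵐ[μ] 0 :=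
    (MeasureTheory.integral_eq_zero_iff_of_nonneg hnn hint).mp h.symm
  -- f vanishes at most at one point of (0,∞)
  have hinj : ∀ x ∈ Set.Ioi (0:ℝ), ∀ y ∈ Set.Ioi (0:ℝ), f x = 0 → f y = 0 → x = y := by
    intro x hx y hy hfx hfy
    have hx0 : (0:ℝ) < x := hx
    have hy0 : (0:ℝ) < y := hy
    have hxfac : ∀ z : ℝ, 0 < z → f z = z ^ β * (c₁ + c₂ * z ^ (α + 1)) := by
      intro z hz
      have : z ^ (α + β + 1) = z ^ (α + 1) * z ^ β := by
        rw [← Real.rpow_add hz]; ring_nf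
      simp only [hf, this]; ring
    have hx1 : c₁ + c₂ * x ^ (α + 1) = 0 := by
      have := hxfac x hx0; rw [hfx] at this
      have hβne : x ^ β ≠ 0 := ne_of_gt (Real.rpow_pos_of_pos hx0 β)
      rcases mul_eq_zero.mp this.symm with h | h
      · exact absurd h hβne
      · exact h
    have hy1 : c₁ + c₂ * y ^ (α + 1) = 0 := by
      have := hxfac y hy0; rw [hfy] at this
      have hβne : y ^ β ≠ 0 := ne_of_gt (Real.rpow_pos_of_pos hy0 β)
      rcases mul_eq_zero.mp this.symm with h | h
      · exact absurd h hβne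
      · exact h
    have hc₂ : c₂ ≠ 0 := by
      rcases hc with h | h
      · intro hc2
        rw [hc2] at hx1
        simp at hx1
        exact h hx1
      · intro hc2; exact h hc2
    have hxy : x ^ (α + 1) = y ^ (α + 1) := by
      have : c₂ * x ^ (α + 1) = c₂ * y ^ (α + 1) := by linarith
      exact mul_left_cancel₀ hc₂ this
    have hane : α + 1 ≠ 0 := by linarith
    calc x = (x ^ (α + 1)) ^ (α + 1)⁻¹ := (Real.rpow_rpow_inv (le_of_lt hx0) hane).symm
      _ = (y ^ (α + 1)) ^ (α + 1)⁻¹ := by rw [hxy]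
      _ = y := Real.rpow_rpow_inv (le_of_lt hy0) hane
  have hZ : ∀ᵐ x ∂(MeasureTheory.volume.restrict (Set.Ioo b (b + 1))), f x ≠ 0 := by
    rw [MeasureTheory.ae_iff]
    have hset : {x | ¬ f x ≠ 0} = {x | f x = 0} := by ext x; simp
    rw [hset]
    have hpre : {x | f x = 0} = f ⁻¹' {0} := rfl
    rw [hpre, MeasureTheory.Measure.restrict_apply (hfmeas (measurableSet_singleton 0))]
    apply Set.Subsingleton.measure_zero
    intro x hx y hy
    exact hinj x (lt_trans hb hx.2.1) y (lt_trans hb hy.2.1) hx.1 hy.1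
  apply hVne
  have hz' := MeasureTheory.ae_restrict_of_ae_restrict_of_subset
    Set.Ioo_subset_Ioc_self hzero
  filter_upwards [hz', hZ] with x hzx hfx
  have h2 : f x ^ 2 ≠ 0 := pow_ne_zero 2 hfx
  have : V x * f x ^ 2 = 0 := hzx
  rcases mul_eq_zero.mp this with h | h
  · exact h
  · exact absurd h h2
end
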